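/- arXiv:1810.01368 — 8 statements merged into one kernel-verified Lean document; each statement's English description precedes it below -/
import Mathlib

section
/- Let n, m ≥ 1, let F : ℝⁿ × ℝᵐ × [0,∞) → ℝⁿ be continuous, let Q : ℝⁿ × [0,∞) → ℝ be locally Lipschitz, nonnegative and Hadamard directionally differentiable at every point, let γ > 0, g : ℝⁿ × [0,∞) → ℝᵐ and ψ : ℝⁿ × ℝᵐ × [0,∞) → ℝᵐ. Assume that for every x ∈ ℝⁿ and t ≥ 0 with Q(x,t) > 0 and every u ∈ ℝᵐ one has Q'((x,t); (F(x,u,t), 1)) ≤ g(x,t)ᵀu and g(x,t)ᵀψ(x,u,t) ≤ 0. Let x : [0,∞) → ℝⁿ be locally Lipschitz and u : [0,∞) → ℝᵐ satisfy u(t) = γψ(x(t), u(t), t) for all t ≥ 0 and ẋ(t) = F(x(t), u(t), t) for almost every t ≥ 0. If Q(x(T), T) = 0 for some T ≥ 0, then Q(x(t), t) = 0 for all t ≥ T. -/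
open Filter Topology MeasureTheory RealInnerProductSpace

/-- The Hadamard directional derivative: `d` is the Hadamard directional derivative of `f`
at `x` in direction `h` if `(f (x + α h') - f x) / α → d` as `(α, h') → (0⁺, h)`. -/
def HasHadamardDerivAt {E : Type*} [NormedAddCommGroup E] [NormedSpace ℝ E]
    (f : E → ℝ) (x h : E) (d : ℝ) : Prop :=
  Filter.Tendsto (fun p : ℝ × E => (f (x + p.1 • p.2) - f x) / p.1)
    ((𝓝[>] (0 : ℝ)) ×ˢ 𝓝 h) (𝓝 d)

open Set in
/-- slope of interval integral of continuous function -/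
lemma aux_slope_integral (V : ℝ → ℝ) (hV : Continuous V) (c : ℝ)
    (hseq : ℕ → ℝ) (hpos : ∀ n, 0 < hseq n) (hto : Tendsto hseq atTop (𝓝 0)) :
    Tendsto (fun n => (∫ t in c..(c + hseq n), V t) / hseq n) atTop (𝓝 (V c)) := by
  have hG : HasDerivAt (fun y => ∫ t in c..y, V t) (V c) c :=
    intervalIntegral.integral_hasDerivAt_right (hV.intervalIntegrable c c)
      ⟨Set.univ, Filter.univ_mem, hV.aestronglyMeasurable.restrict⟩ hV.continuousAt
  have hslope := hasDerivAt_iff_tendsto_slope.mp hG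
  have hmap : Tendsto (fun n => c + hseq n) atTop (𝓝[≠] c) := by
    apply tendsto_nhdsWithin_of_tendsto_nhds_of_eventually_within
    · simpa using (tendsto_const_nhds.add hto)
    · filter_upwards with n
      intro h
      have : hseq n = 0 := by linarith [mem_singleton_iff.mp h]
      exact absurd this (hpos n).ne'
  have := hslope.comp hmap
  refine this.congr fun n => ?_
  simp [slope, intervalIntegral.integral_same, div_eq_inv_mul]

open Set in
/-- Main analytic lemma: a function Lipschitz near `[a,b]`, whose right slope limit
exists and is `≤ 0` a.e. on `(a,b)`, decreases from `a` to `b`. -/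
lemma aux_decrease (V D : ℝ → ℝ) (hV : Continuous V) (a b δ : ℝ) (hab : a < b) (hδ : 0 < δ)
    (K : NNReal) (N : Set ℝ) (hN : Icc a (b + δ) ⊆ N) (hlip : LipschitzOnWith K V N)
    (hae : ∀ᵐ t ∂(volume.restrict (Ioo a b)),
      Tendsto (fun h : ℝ => (V (t + h) - V t) / h) (𝓝[>] 0) (𝓝 (D t)) ∧ D t ≤ 0) :
    V b ≤ V a := by
  set hseq : ℕ → ℝ := fun n => δ / (n + 1) with hseq_def
  have hpos : ∀ n, 0 < hseq n := fun n => by positivity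
  have hle : ∀ n, hseq n ≤ δ := by
    intro n
    rw [hseq_def]
    calc δ / (n + 1 : ℝ) ≤ δ / 1 := by
          apply div_le_div_of_nonneg_left hδ.le one_pos
          simp
      _ = δ := div_one δ
  have hto : Tendsto hseq atTop (𝓝 0) := by
    apply Tendsto.div_atTop (tendsto_const_nhds (x := δ))
    exact tendsto_atTop_add_const_right _ 1 tendsto_natCast_atTop_atTop
  have htoW : Tendsto hseq atTop (𝓝[>] 0) :=
    tendsto_nhdsWithin_of_tendsto_nhds_of_eventually_within _ hto
      (Filter.Eventually.of_forall fun n => hpos n)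
  have hVint : ∀ p q : ℝ, IntervalIntegrable V volume p q := fun p q => hV.intervalIntegrable p q
  have key_int : ∀ h : ℝ, 0 < h → ∫ t in Ioo a b, (V (t + h) - V t) / h =
      ((∫ t in b..(b + h), V t) - ∫ t in a..(a + h), V t) / h := by
    intro h hh
    rw [← integral_Ioc_eq_integral_Ioo, ← intervalIntegral.integral_of_le hab.le,
      intervalIntegral.integral_div]
    congr 1
    have hc : Continuous fun t => V (t + h) := hV.comp (continuous_id.add continuous_const)
    rw [intervalIntegral.integral_sub (hc.intervalIntegrable a b) (hVint a b),
      intervalIntegral.integral_comp_add_right]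
    have h1 : (∫ t in a..(a + h), V t) + ∫ t in (a + h)..(b + h), V t = ∫ t in a..(b + h), V t :=
      intervalIntegral.integral_add_adjacent_intervals (hVint _ _) (hVint _ _)
    have h2 : (∫ t in a..b, V t) + ∫ t in b..(b + h), V t = ∫ t in a..(b + h), V t :=
      intervalIntegral.integral_add_adjacent_intervals (hVint _ _) (hVint _ _)
    linarith
  have hRHS : Tendsto
      (fun n => ((∫ t in b..(b + hseq n), V t) - ∫ t in a..(a + hseq n), V t) / hseq n)
      atTop (𝓝 (V b - V a)) := by
    have h1 := aux_slope_integral V hV b hseq hpos hto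
    have h2 := aux_slope_integral V hV a hseq hpos hto
    refine (h1.sub h2).congr fun n => ?_
    rw [sub_div]
  have hDCT : Tendsto (fun n => ∫ t in Ioo a b, (V (t + hseq n) - V t) / hseq n) atTop
      (𝓝 (∫ t in Ioo a b, D t)) := by
    apply tendsto_integral_of_dominated_convergence (fun _ => (K : ℝ))
    · intro n
      exact (((hV.comp (continuous_id.add continuous_const)).sub hV).div_const
        _).aestronglyMeasurable.restrict
    · exact integrableOn_const measure_Ioo_lt_top.ne
    · intro n
      filter_upwards [ae_restrict_mem measurableSet_Ioo] with t ht
      have ht1 : t ∈ N := hN ⟨ht.1.le, by linarith [ht.2, hδ]⟩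
      have ht2 : t + hseq n ∈ N := hN ⟨by linarith [ht.1, (hpos n)], by linarith [ht.2, hle n]⟩
      have hd := hlip.dist_le_mul _ ht2 _ ht1
      rw [Real.dist_eq, Real.dist_eq] at hd
      rw [Real.norm_eq_abs, abs_div, abs_of_pos (hpos n), div_le_iff₀ (hpos n)]
      calc |V (t + hseq n) - V t| ≤ K * |t + hseq n - t| := hd
        _ = K * hseq n := by rw [add_sub_cancel_left, abs_of_pos (hpos n)]
    · filter_upwards [hae] with t ht
      exact ht.1.comp htoW
  have hInonpos : ∫ t in Ioo a b, D t ≤ 0 := by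
    apply integral_nonpos_of_ae
    filter_upwards [hae] with t ht using ht.2
  have heq : Tendsto
      (fun n => ((∫ t in b..(b + hseq n), V t) - ∫ t in a..(a + hseq n), V t) / hseq n)
      atTop (𝓝 (∫ t in Ioo a b, D t)) :=
    hDCT.congr fun n => key_int (hseq n) (hpos n)
  have := tendsto_nhds_unique hRHS heq
  linarith

open Set in
/-- Chain rule: Hadamard differentiability plus a differentiable path gives the
right slope limit of the composition. -/
lemma aux_chain {E : Type*} [NormedAddCommGroup E] [NormedSpace ℝ E]
    (Q : E × ℝ → ℝ) (Q' : E × ℝ → E × ℝ → ℝ)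
    (hQ' : ∀ p h, HasHadamardDerivAt Q p h (Q' p h))
    (x : ℝ → E) (t : ℝ) (v : E) (hx : HasDerivAt x v t) :
    Tendsto (fun h : ℝ => (Q (x (t + h), t + h) - Q (x t, t)) / h) (𝓝[>] 0)
      (𝓝 (Q' (x t, t) (v, 1))) := by
  have hslope := hasDerivAt_iff_tendsto_slope.mp hx
  have hmap : Tendsto (fun h : ℝ => t + h) (𝓝[>] (0:ℝ)) (𝓝[≠] t) := by
    apply tendsto_nhdsWithin_of_tendsto_nhds_of_eventually_within
    · have h0 : Tendsto (fun h : ℝ => t + h) (𝓝 0) (𝓝 t) := by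
        simpa using tendsto_const_nhds.add (tendsto_id (x := 𝓝 (0:ℝ)))
      exact h0.mono_left nhdsWithin_le_nhds
    · filter_upwards [self_mem_nhdsWithin] with h hh
      simp only [Set.mem_compl_iff, Set.mem_singleton_iff]
      intro hc
      have : h = 0 := by linarith
      exact absurd this (ne_of_gt hh)
  have h2 : Tendsto (fun h : ℝ => (h⁻¹ • (x (t + h) - x t) : E)) (𝓝[>] 0) (𝓝 v) := by
    refine (hslope.comp hmap).congr fun h => ?_
    simp [slope, Function.comp]
  have hdir : Tendsto (fun h : ℝ => ((h⁻¹ • (x (t + h) - x t) : E), (1:ℝ))) (𝓝[>] 0)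
      (𝓝 ((v, 1) : E × ℝ)) := h2.prodMk_nhds tendsto_const_nhds
  have hpair : Tendsto (fun h : ℝ => (h, ((h⁻¹ • (x (t + h) - x t) : E), (1:ℝ))))
      (𝓝[>] (0:ℝ)) ((𝓝[>] (0:ℝ)) ×ˢ 𝓝 ((v, 1) : E × ℝ)) := tendsto_id.prodMk hdir
  have hcomp := (hQ' (x t, t) (v, 1)).comp hpair
  refine Filter.Tendsto.congr' ?_ hcomp
  filter_upwards [self_mem_nhdsWithin] with h hh
  have hne : h ≠ 0 := ne_of_gt hh
  have harg : ((x t, t) : E × ℝ) + h • ((h⁻¹ • (x (t + h) - x t) : E), (1:ℝ))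
      = (x (t + h), t + h) := by
    rw [Prod.smul_mk, Prod.mk_add_mk, smul_inv_smul₀ hne]
    simp
  simp only [Function.comp]
  rw [harg]

/-- Lemma 1 of the paper: once the goal function vanishes along a trajectory of the
closed-loop Speed-Gradient system, it vanishes forever afterwards. -/
theorem speed_gradient_goal_stays_zero
    (n m : ℕ) (hn : 1 ≤ n) (hm : 1 ≤ m)
    (F : EuclideanSpace ℝ (Fin n) → EuclideanSpace ℝ (Fin m) → ℝ → EuclideanSpace ℝ (Fin n))
    (hF : ContinuousOn
      (fun p : EuclideanSpace ℝ (Fin n) × EuclideanSpace ℝ (Fin m) × ℝ => F p.1 p.2.1 p.2.2)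
      {p | 0 ≤ p.2.2})
    (Q : EuclideanSpace ℝ (Fin n) × ℝ → ℝ)
    (hQlip : LocallyLipschitz Q)
    (hQnonneg : ∀ x t, 0 ≤ t → 0 ≤ Q (x, t))
    (Q' : EuclideanSpace ℝ (Fin n) × ℝ → EuclideanSpace ℝ (Fin n) × ℝ → ℝ)
    (hQ' : ∀ p h, HasHadamardDerivAt Q p h (Q' p h))
    (γ : ℝ) (hγ : 0 < γ)
    (g : EuclideanSpace ℝ (Fin n) → ℝ → EuclideanSpace ℝ (Fin m))
    (ψ : EuclideanSpace ℝ (Fin n) → EuclideanSpace ℝ (Fin m) → ℝ → EuclideanSpace ℝ (Fin m))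
    (hi : ∀ x t, 0 ≤ t → 0 < Q (x, t) →
      ∀ u : EuclideanSpace ℝ (Fin m), Q' (x, t) (F x u t, 1) ≤ ⟪g x t, u⟫)
    (hii : ∀ x t, 0 ≤ t → 0 < Q (x, t) →
      ∀ u : EuclideanSpace ℝ (Fin m), ⟪g x t, ψ x u t⟫ ≤ 0)
    (x : ℝ → EuclideanSpace ℝ (Fin n)) (u : ℝ → EuclideanSpace ℝ (Fin m))
    (hxlip : LocallyLipschitz x)
    (hu : ∀ t, 0 ≤ t → u t = γ • ψ (x t) (u t) t)
    (hode : ∀ᵐ t ∂(volume.restrict (Set.Ici (0 : ℝ))), HasDerivAt x (F (x t) (u t) t) t)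
    (T : ℝ) (hT : 0 ≤ T) (hQT : Q (x T, T) = 0) :
    ∀ t, T ≤ t → Q (x t, t) = 0 := by
  intro t₁ ht₁
  set V : ℝ → ℝ := fun t => Q (x t, t) with hV_def
  have hVlip : LocallyLipschitz V := hQlip.comp (hxlip.prodMk LocallyLipschitz.id)
  have hVcont : Continuous V := hVlip.continuous
  set D : ℝ → ℝ := fun t => Q' (x t, t) (F (x t) (u t) t, 1) with hD_def
  have hT1 : (0:ℝ) ≤ t₁ := le_trans hT ht₁
  have hnn : 0 ≤ V t₁ := hQnonneg _ _ hT1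
  by_contra hne
  have hpos : 0 < V t₁ := lt_of_le_of_ne hnn (Ne.symm hne)
  set Z : Set ℝ := Set.Icc T t₁ ∩ {r | V r = 0} with hZ_def
  have hZne : T ∈ Z := ⟨⟨le_refl T, ht₁⟩, hQT⟩
  have hZbdd : BddAbove Z := ⟨t₁, fun r hr => hr.1.2⟩
  have hZclosed : IsClosed Z := isClosed_Icc.inter (isClosed_singleton.preimage hVcont)
  set s := sSup Z with hs_def
  have hsZ : s ∈ Z := hZclosed.csSup_mem ⟨T, hZne⟩ hZbdd
  have hVs : V s = 0 := hsZ.2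
  have hsT : T ≤ s := hsZ.1.1
  have hs0 : (0:ℝ) ≤ s := le_trans hT hsT
  have hslt : s < t₁ :=
    lt_of_le_of_ne hsZ.1.2 (fun h => by rw [h] at hVs; exact hpos.ne' hVs)
  have hmid : ∀ r, s < r → r ≤ t₁ → 0 < V r := by
    intro r h1 h2
    have h0r : (0:ℝ) ≤ r := le_trans hs0 h1.le
    rcases lt_or_eq_of_le (hQnonneg (x r) r h0r) with h | h
    · exact h
    · exact absurd (le_csSup hZbdd ⟨⟨hsT.trans h1.le, h2⟩, h.symm⟩) (not_le.mpr h1)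
  obtain ⟨K, N, hNnhds, hlip⟩ := hVlip s
  obtain ⟨ε, hε, hball⟩ := Metric.nhds_basis_closedBall.mem_iff.mp hNnhds
  set c := min t₁ (s + ε / 2) with hc_def
  have hsc : s < c := lt_min hslt (by linarith)
  have hct : c ≤ t₁ := min_le_left _ _
  have hsub : Set.Icc s (c + ε / 4) ⊆ N := by
    intro r hr
    apply hball
    rw [Real.closedBall_eq_Icc]
    have hc2 : c ≤ s + ε / 2 := min_le_right _ _
    exact ⟨by linarith [hr.1], by linarith [hr.2]⟩
  have hae : ∀ᵐ t ∂(volume.restrict (Set.Ioo s c)),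
      Filter.Tendsto (fun h : ℝ => (V (t + h) - V t) / h) (𝓝[>] 0) (𝓝 (D t)) ∧ D t ≤ 0 := by
    have hsub2 : Set.Ioo s c ⊆ Set.Ici (0:ℝ) := fun r hr => le_trans hs0 hr.1.le
    have hode' := ae_restrict_of_ae_restrict_of_subset hsub2 hode
    filter_upwards [hode', ae_restrict_mem measurableSet_Ioo] with t hd hmem
    have h0t : (0:ℝ) ≤ t := le_trans hs0 hmem.1.le
    have hVt : 0 < V t := hmid t hmem.1 (hmem.2.le.trans hct)
    refine ⟨aux_chain Q Q' hQ' x t _ hd, ?_⟩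
    have hQ1 := hi (x t) t h0t hVt (u t)
    have hQ2 := hii (x t) t h0t hVt (u t)
    have hu' := hu t h0t
    have hinner : ⟪g (x t) t, u t⟫ = γ * ⟪g (x t) t, ψ (x t) (u t) t⟫ := by
      nth_rewrite 1 [hu']
      rw [real_inner_smul_right]
    have hγψ : γ * ⟪g (x t) t, ψ (x t) (u t) t⟫ ≤ 0 :=
      mul_nonpos_of_nonneg_of_nonpos hγ.le hQ2
    calc D t ≤ ⟪g (x t) t, u t⟫ := hQ1
      _ = γ * ⟪g (x t) t, ψ (x t) (u t) t⟫ := hinner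
      _ ≤ 0 := hγψ
  have hdec : V c ≤ V s :=
    aux_decrease V D hVcont s c (ε / 4) hsc (by positivity) K N hsub hlip hae
  have hVc : 0 < V c := hmid c hsc hct
  rw [hVs] at hdec
  linarith
end

section
/- Let Q(x) = (σ(x) − |x₃|)² + x₃² with σ(x) = √(x₁² + x₂²). For every x ∈ ℝ³ with x₃ = 0, the function Q is Hadamard directionally differentiable at x with Q'(x; h) = 2x₁h₁ + 2x₂h₂ − 2|h₃|σ(x) for all h ∈ ℝ³; moreover Q is Hadamard superdifferentiable at x with superdifferential the convex hull of the two points (2x₁, 2x₂, 2σ(x)) and (2x₁, 2x₂, −2σ(x)), i.e. Q'(x; h) = min{vᵀh : v ∈ co{(2x₁, 2x₂, 2σ(x)), (2x₁, 2x₂, −2σ(x))}} for all h ∈ ℝ³. -/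
open Filter Topology RealInnerProductSpace

/-- `σ x = √(x₁² + x₂²)`. -/
noncomputable def sigmaBI (x : EuclideanSpace ℝ (Fin 3)) : ℝ :=
  Real.sqrt (x 0 ^ 2 + x 1 ^ 2)

/-- The goal function `Q(x) = (σ(x) − |x₃|)² + x₃²` for the Brockett integrator. -/
noncomputable def QBI (x : EuclideanSpace ℝ (Fin 3)) : ℝ :=
  (sigmaBI x - |x 2|) ^ 2 + (x 2) ^ 2

/-- At every point with `x₃ = 0`, the goal function `Q` is Hadamard directionally
differentiable with `Q'(x; h) = 2x₁h₁ + 2x₂h₂ − 2|h₃|σ(x)`, and it is Hadamard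
superdifferentiable with superdifferential
`co {(2x₁, 2x₂, 2σ(x)), (2x₁, 2x₂, −2σ(x))}`: its directional derivative in direction `h`
is the minimum of `⟪v, h⟫` over this convex hull. -/
theorem QBI_superdifferentiable_on_x3_eq_zero (x : EuclideanSpace ℝ (Fin 3))
    (hx3 : x 2 = 0) :
    ∀ h : EuclideanSpace ℝ (Fin 3),
      HasHadamardDerivAt QBI x h
        (2 * x 0 * h 0 + 2 * x 1 * h 1 - 2 * |h 2| * sigmaBI x) ∧
      IsLeast {r : ℝ | ∃ v ∈ convexHull ℝ
          ({(WithLp.equiv 2 (Fin 3 → ℝ)).symm ![2 * x 0, 2 * x 1, 2 * sigmaBI x],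
            (WithLp.equiv 2 (Fin 3 → ℝ)).symm ![2 * x 0, 2 * x 1, -2 * sigmaBI x]} :
            Set (EuclideanSpace ℝ (Fin 3))), r = ⟪v, h⟫}
        (2 * x 0 * h 0 + 2 * x 1 * h 1 - 2 * |h 2| * sigmaBI x) := by
  have hσ : 0 ≤ sigmaBI x := Real.sqrt_nonneg _
  intro h
  constructor
  · -- Hadamard derivative
    set g : ℝ × EuclideanSpace ℝ (Fin 3) → ℝ := fun p =>
      2 * x 0 * p.2 0 + 2 * x 1 * p.2 1 + p.1 * ((p.2 0) ^ 2 + (p.2 1) ^ 2)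
        - 2 * |p.2 2| * Real.sqrt ((x 0 + p.1 * p.2 0) ^ 2 + (x 1 + p.1 * p.2 1) ^ 2)
        + 2 * p.1 * (p.2 2) ^ 2 with hg
    have hcont : ContinuousAt g (0, h) := by
      apply ContinuousAt.add
      apply ContinuousAt.sub
      · fun_prop
      · fun_prop
      · fun_prop
    have hval : g (0, h) = 2 * x 0 * h 0 + 2 * x 1 * h 1 - 2 * |h 2| * sigmaBI x := by
      simp [hg, sigmaBI]
    have hle : (𝓝[>] (0 : ℝ)) ×ˢ 𝓝 h ≤ 𝓝 ((0 : ℝ), h) := by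
      rw [nhds_prod_eq]
      exact Filter.prod_mono nhdsWithin_le_nhds le_rfl
    have htend : Filter.Tendsto g ((𝓝[>] (0 : ℝ)) ×ˢ 𝓝 h)
        (𝓝 (2 * x 0 * h 0 + 2 * x 1 * h 1 - 2 * |h 2| * sigmaBI x)) := by
      rw [← hval]
      exact (hcont.tendsto).mono_left hle
    refine htend.congr' ?_
    have hpos : ∀ᶠ p : ℝ × EuclideanSpace ℝ (Fin 3) in (𝓝[>] (0 : ℝ)) ×ˢ 𝓝 h, 0 < p.1 :=
      Filter.Eventually.prod_inl (by exact eventually_mem_nhdsWithin) _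
    filter_upwards [hpos] with p hp
    obtain ⟨α, v⟩ := p
    simp only at hp
    have e1 : Real.sqrt ((x 0 + α * v 0) ^ 2 + (x 1 + α * v 1) ^ 2) ^ 2
        = (x 0 + α * v 0) ^ 2 + (x 1 + α * v 1) ^ 2 := Real.sq_sqrt (by positivity)
    have e2 : Real.sqrt (x 0 ^ 2 + x 1 ^ 2) ^ 2 = x 0 ^ 2 + x 1 ^ 2 :=
      Real.sq_sqrt (by positivity)
    simp only [hg, QBI, sigmaBI, PiLp.add_apply, PiLp.smul_apply, smul_eq_mul, hx3,
      zero_add, abs_mul, abs_of_pos hp, abs_zero]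
    rw [eq_div_iff hp.ne']
    have e3 : |v 2| ^ 2 = v 2 ^ 2 := sq_abs _
    linear_combination -e1 + e2 - α ^ 2 * e3
  · constructor
    · -- membership
      rcases le_or_gt 0 (h 2) with hc | hc
      · refine ⟨(WithLp.equiv 2 (Fin 3 → ℝ)).symm ![2 * x 0, 2 * x 1, -2 * sigmaBI x],
          subset_convexHull ℝ _ (by simp), ?_⟩
        simp [PiLp.inner_apply, Fin.sum_univ_three, RCLike.inner_apply, abs_of_nonneg hc]
        ring
      · refine ⟨(WithLp.equiv 2 (Fin 3 → ℝ)).symm ![2 * x 0, 2 * x 1, 2 * sigmaBI x],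
          subset_convexHull ℝ _ (by simp), ?_⟩
        simp [PiLp.inner_apply, Fin.sum_univ_three, RCLike.inner_apply, abs_of_neg hc]
        ring
    · rintro r ⟨v, hv, rfl⟩
      rw [convexHull_pair] at hv
      obtain ⟨a, b, ha, hb, hab, rfl⟩ := hv
      rw [inner_add_left, real_inner_smul_left, real_inner_smul_left]
      have i1 : ⟪(WithLp.equiv 2 (Fin 3 → ℝ)).symm ![2 * x 0, 2 * x 1, 2 * sigmaBI x],
          h⟫ = 2 * x 0 * h 0 + 2 * x 1 * h 1 + 2 * sigmaBI x * h 2 := by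
        simp [PiLp.inner_apply, Fin.sum_univ_three, RCLike.inner_apply]
        ring
      have i2 : ⟪(WithLp.equiv 2 (Fin 3 → ℝ)).symm ![2 * x 0, 2 * x 1, -2 * sigmaBI x],
          h⟫ = 2 * x 0 * h 0 + 2 * x 1 * h 1 - 2 * sigmaBI x * h 2 := by
        simp [PiLp.inner_apply, Fin.sum_univ_three, RCLike.inner_apply]
        ring
      rw [i1, i2]
      have hb' : b = 1 - a := by linarith
      subst hb'
      rcases le_or_gt 0 (h 2) with hc | hc
      · rw [abs_of_nonneg hc]
        nlinarith [mul_nonneg ha (mul_nonneg hσ hc)]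
      · rw [abs_of_neg hc]
        nlinarith [mul_nonneg hb (mul_nonneg hσ (neg_nonneg.2 hc.le))]
end

section
/- Let Q(x) = (σ(x) − |x₃|)² + x₃² with σ(x) = √(x₁² + x₂²). For every x ∈ ℝ³ with σ(x) = 0 (i.e. x₁ = x₂ = 0), the function Q is Hadamard directionally differentiable at x with Q'(x; h) = 4x₃h₃ − 2|x₃|√(h₁² + h₂²) for all h ∈ ℝ³; moreover Q is Hadamard superdifferentiable at x with superdifferential {(−2|x₃|v₁, −2|x₃|v₂, 4x₃) : v ∈ ℝ², v₁² + v₂² ≤ 1}, i.e. Q'(x; h) equals the minimum of vᵀh over this set. -/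
open Filter Topology RealInnerProductSpace

private lemma cs_aux (v₁ v₂ h0 h1 : ℝ) (hv : v₁ ^ 2 + v₂ ^ 2 ≤ 1) :
    v₁ * h0 + v₂ * h1 ≤ Real.sqrt (h0 ^ 2 + h1 ^ 2) := by
  have hs : Real.sqrt (h0 ^ 2 + h1 ^ 2) ^ 2 = h0 ^ 2 + h1 ^ 2 :=
    Real.sq_sqrt (by positivity)
  have hs0 : 0 ≤ Real.sqrt (h0 ^ 2 + h1 ^ 2) := Real.sqrt_nonneg _
  nlinarith [sq_nonneg (v₁ * h1 - v₂ * h0), sq_nonneg (v₁ * h0 + v₂ * h1 - Real.sqrt (h0 ^ 2 + h1 ^ 2)), sq_nonneg (v₁ * h0 + v₂ * h1)]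

/-- At every point with `σ(x) = 0` (i.e. `x₁ = x₂ = 0`), the goal function `Q` is Hadamard
directionally differentiable with `Q'(x; h) = 4x₃h₃ − 2|x₃|√(h₁² + h₂²)`, and it is
Hadamard superdifferentiable with superdifferential
`{(−2|x₃|v₁, −2|x₃|v₂, 4x₃) : v₁² + v₂² ≤ 1}`: its directional derivative in direction `h`
is the minimum of `⟪v, h⟫` over this set. -/
theorem QBI_superdifferentiable_on_sigma_eq_zero (x : EuclideanSpace ℝ (Fin 3))
    (hσ : sigmaBI x = 0) :
    ∀ h : EuclideanSpace ℝ (Fin 3),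
      HasHadamardDerivAt QBI x h
        (4 * x 2 * h 2 - 2 * |x 2| * Real.sqrt (h 0 ^ 2 + h 1 ^ 2)) ∧
      IsLeast {r : ℝ | ∃ v₁ v₂ : ℝ, v₁ ^ 2 + v₂ ^ 2 ≤ 1 ∧
          r = ⟪(WithLp.equiv 2 (Fin 3 → ℝ)).symm
                ![-2 * |x 2| * v₁, -2 * |x 2| * v₂, 4 * x 2], h⟫}
        (4 * x 2 * h 2 - 2 * |x 2| * Real.sqrt (h 0 ^ 2 + h 1 ^ 2)) := by
  have hx01 : x 0 = 0 ∧ x 1 = 0 := by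
    have := Real.sqrt_eq_zero (by positivity) |>.mp hσ
    constructor <;> nlinarith [sq_nonneg (x 0), sq_nonneg (x 1)]
  obtain ⟨hx0, hx1⟩ := hx01
  intro h
  set s : ℝ := Real.sqrt (h 0 ^ 2 + h 1 ^ 2) with hs
  constructor
  · -- Hadamard derivative
    have hcont : ∀ i : Fin 3, Continuous (fun y : EuclideanSpace ℝ (Fin 3) => y i) :=
      fun i => (EuclideanSpace.proj i : EuclideanSpace ℝ (Fin 3) →L[ℝ] ℝ).continuous
    -- the simplified function
    set F : ℝ × EuclideanSpace ℝ (Fin 3) → ℝ := fun p =>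
      p.1 * (p.2 0 ^ 2 + p.2 1 ^ 2) - 2 * Real.sqrt (p.2 0 ^ 2 + p.2 1 ^ 2) * |x 2 + p.1 * p.2 2|
        + 4 * x 2 * p.2 2 + 2 * p.1 * p.2 2 ^ 2 with hF
    have hFc : Continuous F := by
      apply Continuous.add
      apply Continuous.add
      apply Continuous.sub
      · exact continuous_fst.mul (((hcont 0).comp continuous_snd).pow 2 |>.add
          (((hcont 1).comp continuous_snd).pow 2))
      · exact (continuous_const.mul ((((hcont 0).comp continuous_snd).pow 2 |>.add
          (((hcont 1).comp continuous_snd).pow 2)).sqrt)).mul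
          ((continuous_const.add (continuous_fst.mul ((hcont 2).comp continuous_snd))).abs)
      · exact continuous_const.mul ((hcont 2).comp continuous_snd)
      · exact (continuous_const.mul continuous_fst).mul (((hcont 2).comp continuous_snd).pow 2)
    have hlim : Tendsto F ((𝓝[>] (0:ℝ)) ×ˢ 𝓝 h) (𝓝 (4 * x 2 * h 2 - 2 * |x 2| * s)) := by
      have h1 : Tendsto F (𝓝 ((0:ℝ), h)) (𝓝 (F (0, h))) := hFc.continuousAt
      have h2 : ((𝓝[>] (0:ℝ)) ×ˢ 𝓝 h) ≤ 𝓝 ((0:ℝ), h) := by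
        rw [nhds_prod_eq]
        exact Filter.prod_mono nhdsWithin_le_nhds le_rfl
      have := h1.mono_left h2
      convert this using 2
      simp [hF, hs, abs_mul]
      ring
    refine hlim.congr' ?_
    filter_upwards [Filter.prod_mem_prod self_mem_nhdsWithin univ_mem] with p hp
    obtain ⟨hα, -⟩ := hp
    have hα : (0:ℝ) < p.1 := hα
    -- compute the difference quotient
    have hadd : ∀ i : Fin 3, (x + p.1 • p.2) i = x i + p.1 * p.2 i := by intro i; simp
    have hσ' : sigmaBI (x + p.1 • p.2) = p.1 * Real.sqrt (p.2 0 ^ 2 + p.2 1 ^ 2) := by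
      rw [sigmaBI, hadd 0, hadd 1, hx0, hx1]
      rw [show (0 + p.1 * p.2 0) ^ 2 + (0 + p.1 * p.2 1) ^ 2
          = p.1 ^ 2 * (p.2 0 ^ 2 + p.2 1 ^ 2) by ring]
      rw [Real.sqrt_mul (by positivity), Real.sqrt_sq hα.le]
    have hx2abs : |x 2| ^ 2 = x 2 ^ 2 := sq_abs _
    have habs2 : |x 2 + p.1 * p.2 2| ^ 2 = (x 2 + p.1 * p.2 2) ^ 2 := sq_abs _
    have hsq : Real.sqrt (p.2 0 ^ 2 + p.2 1 ^ 2) ^ 2 = p.2 0 ^ 2 + p.2 1 ^ 2 :=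
      Real.sq_sqrt (by positivity)
    rw [QBI, QBI, hσ', hadd 2, hσ]
    rw [eq_div_iff hα.ne']
    linear_combination (-(p.1 ^ 2)) * hsq - habs2 + hx2abs
  · -- IsLeast
    constructor
    · -- membership
      by_cases h0 : s = 0
      · refine ⟨0, 0, by norm_num, ?_⟩
        simp [PiLp.inner_apply, Fin.sum_univ_three, h0]
        ring
      · have hspos : 0 < s := lt_of_le_of_ne (Real.sqrt_nonneg _) (Ne.symm h0)
        refine ⟨h 0 / s, h 1 / s, ?_, ?_⟩
        · have : (h 0 / s) ^ 2 + (h 1 / s) ^ 2 = (h 0 ^ 2 + h 1 ^ 2) / s ^ 2 := by ring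
          have hne : h 0 ^ 2 + h 1 ^ 2 ≠ 0 := fun hz => h0 (by rw [hs, hz, Real.sqrt_zero])
          rw [this, Real.sq_sqrt (by positivity), div_self hne]
        · simp only [PiLp.inner_apply, Fin.sum_univ_three]
          simp only [WithLp.equiv_symm_apply, PiLp.toLp_apply, WithLp.ofLp_toLp, Matrix.cons_val_zero, Matrix.cons_val_one,
            Matrix.head_cons, Matrix.cons_val_two, Matrix.tail_cons, RCLike.inner_apply,
            conj_trivial]
          have hs2 : s * s = h 0 ^ 2 + h 1 ^ 2 := Real.mul_self_sqrt (by positivity)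
          field_simp
          linear_combination (-2 * |x 2|) * hs2
    · rintro r ⟨v₁, v₂, hv, rfl⟩
      simp only [PiLp.inner_apply, Fin.sum_univ_three, WithLp.equiv_symm_apply, PiLp.toLp_apply, WithLp.ofLp_toLp,
        Matrix.cons_val_zero, Matrix.cons_val_one, Matrix.head_cons, Matrix.cons_val_two,
        Matrix.tail_cons, RCLike.inner_apply, conj_trivial]
      have := cs_aux v₁ v₂ (h 0) (h 1) hv
      nlinarith [abs_nonneg (x 2), mul_le_mul_of_nonneg_left this (abs_nonneg (x 2))]
end

section
/- For every x ∈ ℝ³ with σ(x) ≠ 0 and x₃ ≠ 0, the vector g(x) = (g₁(x), g₂(x)) is nonzero, i.e. (g₁(x), g₂(x)) ≠ (0, 0). -/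
/-- First component of the speed-gradient vector `g(x)` for the Brockett integrator:
`g₁(x) = 2x₁ − 4x₂x₃ − 2|x₃|x₁/σ(x) + 2 sgn(x₃) x₂ σ(x)`. -/
noncomputable def g1BI (x : EuclideanSpace ℝ (Fin 3)) : ℝ :=
  2 * x 0 - 4 * x 1 * x 2 - 2 * |x 2| * x 0 / sigmaBI x + 2 * Real.sign (x 2) * x 1 * sigmaBI x

/-- Second component of the speed-gradient vector `g(x)` for the Brockett integrator:
`g₂(x) = 2x₂ + 4x₁x₃ − 2|x₃|x₂/σ(x) − 2 sgn(x₃) x₁ σ(x)`. -/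
noncomputable def g2BI (x : EuclideanSpace ℝ (Fin 3)) : ℝ :=
  2 * x 1 + 4 * x 0 * x 2 - 2 * |x 2| * x 1 / sigmaBI x - 2 * Real.sign (x 2) * x 0 * sigmaBI x

/-- For every `x` with `σ(x) ≠ 0` and `x₃ ≠ 0`, the vector `g(x) = (g₁(x), g₂(x))` is
nonzero. -/
theorem gBI_ne_zero (x : EuclideanSpace ℝ (Fin 3))
    (hσ : sigmaBI x ≠ 0) (hx3 : x 2 ≠ 0) :
    (g1BI x, g2BI x) ≠ ((0 : ℝ), (0 : ℝ)) := by
  intro h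
  have h1 : g1BI x = 0 := congrArg Prod.fst h
  have h2 : g2BI x = 0 := congrArg Prod.snd h
  unfold g1BI at h1; unfold g2BI at h2
  have hσpos : 0 < sigmaBI x := lt_of_le_of_ne (Real.sqrt_nonneg _) (Ne.symm hσ)
  have hσ2 : sigmaBI x ^ 2 = x 0 ^ 2 + x 1 ^ 2 := Real.sq_sqrt (by positivity)
  have hs : Real.sign (x 2) * |x 2| = x 2 := by
    rcases lt_or_gt_of_ne hx3 with h' | h'
    · simp [Real.sign_of_neg h', abs_of_neg h']
    · simp [Real.sign_of_pos h', abs_of_pos h']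
  field_simp at h1 h2
  set σ := sigmaBI x with hσdef
  set s := Real.sign (x 2) with hsdef
  set a := |x 2| with hadef
  have c1 : 2 * σ ^ 2 * (σ - a) = 0 := by
    linear_combination (x 0) * h1 + (x 1) * h2 + (2 * σ - 2 * a) * hσ2
  have c2 : 2 * σ ^ 3 * (s * σ - 2 * x 2) = 0 := by
    linear_combination (x 1) * h1 - (x 0) * h2 + (2 * s * σ ^ 2 - 4 * x 2 * σ) * hσ2
  have hσa : σ = a := by
    rcases mul_eq_zero.mp c1 with h' | h'
    · nlinarith
    · linarith
  have hsσ : s * σ = 2 * x 2 := by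
    rcases mul_eq_zero.mp c2 with h' | h'
    · exact absurd h' (by positivity)
    · linarith
  rw [hσa, hs] at hsσ
  exact hx3 (by linarith)
end

section
/- Let C = {x ∈ ℝ³ : σ(x) = 0, x₃ ≠ 0}, and define ḡ : ℝ³ \ C → ℝ² by ḡ(x) = g(x) if σ(x) ≠ 0 and x₃ ≠ 0, and ḡ(x) = (2x₁, 2x₂) if x₃ = 0. Then for every Δ > 0 and r > 0 there exists a > 0 such that |ḡ(x)| ≥ a for all x ∈ ℝ³ \ C with Q(x) ≥ Δ and |x| ≤ r. -/
/-- The exceptional set: the `x₃`-axis without the origin. -/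
def CBI : Set (EuclideanSpace ℝ (Fin 3)) := {x | sigmaBI x = 0 ∧ x 2 ≠ 0}

/-- The vector `ḡ(x)`, defined off the set `C`: `ḡ(x) = g(x)` when `σ(x) ≠ 0, x₃ ≠ 0`, and
`ḡ(x) = (2x₁, 2x₂)` when `x₃ = 0`. -/
noncomputable def gbarBI (x : EuclideanSpace ℝ (Fin 3)) : ℝ × ℝ :=
  if x 2 = 0 then (2 * x 0, 2 * x 1) else (g1BI x, g2BI x)

lemma keyBI' (σ A B s τ : ℝ) (hσ : σ ≠ 0) (hσsq : σ^2 = A^2 + B^2) (hs2 : s^2 = 1) :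
    (2*A - 4*B*(s*τ) - 2 * τ * A / σ + 2 * s * B * σ)^2
      + (2*B + 4*A*(s*τ) - 2 * τ * B / σ - 2 * s * A * σ)^2
      = 4*(σ - τ)^2 + 4*σ^2*(σ - 2 * τ)^2 := by
  have e1 : σ * (2*A - 4*B*(s*τ) - 2 * τ * A / σ + 2 * s * B * σ)
      = 2*A*(σ-τ) + 2*s*B*σ*(σ-2*τ) := by
    field_simp; ring
  have e2 : σ * (2*B + 4*A*(s*τ) - 2 * τ * B / σ - 2 * s * A * σ)
      = 2*B*(σ-τ) - 2*s*A*σ*(σ-2*τ) := by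
    field_simp; ring
  have key2 : (σ * (2*A - 4*B*(s*τ) - 2 * τ * A / σ + 2 * s * B * σ))^2
      + (σ * (2*B + 4*A*(s*τ) - 2 * τ * B / σ - 2 * s * A * σ))^2
      = σ^2 * (4*(σ - τ)^2 + 4*σ^2*(σ - 2 * τ)^2) := by
    rw [e1, e2]
    linear_combination (-(4*(σ-τ)^2) - 4*σ^2*(σ-2*τ)^2) * hσsq
      + 4*(A^2+B^2)*σ^2*(σ-2*τ)^2 * hs2
  have h2 : σ^2 * ((2*A - 4*B*(s*τ) - 2 * τ * A / σ + 2 * s * B * σ)^2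
      + (2*B + 4*A*(s*τ) - 2 * τ * B / σ - 2 * s * A * σ)^2)
      = σ^2 * (4*(σ - τ)^2 + 4*σ^2*(σ - 2 * τ)^2) := by
    linear_combination key2
  exact mul_left_cancel₀ (pow_ne_zero 2 hσ) h2

lemma keyBI (σ A B t : ℝ) (hσ : σ ≠ 0) (hσsq : σ^2 = A^2 + B^2) (ht : t ≠ 0) :
    (2*A - 4*B*t - 2 * |t| * A / σ + 2 * Real.sign t * B * σ)^2
      + (2*B + 4*A*t - 2 * |t| * B / σ - 2 * Real.sign t * A * σ)^2
      = 4*(σ - |t|)^2 + 4*σ^2*(σ - 2 * |t|)^2 := by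
  have hs2 : Real.sign t ^ 2 = 1 := by
    rcases ht.lt_or_gt with h | h
    · rw [Real.sign_of_neg h]; ring
    · rw [Real.sign_of_pos h]; ring
  have hst : t = Real.sign t * |t| := by
    rcases ht.lt_or_gt with h | h
    · rw [Real.sign_of_neg h, abs_of_neg h]; ring
    · rw [Real.sign_of_pos h, abs_of_pos h]; ring
  calc (2*A - 4*B*t - 2 * |t| * A / σ + 2 * Real.sign t * B * σ)^2
      + (2*B + 4*A*t - 2 * |t| * B / σ - 2 * Real.sign t * A * σ)^2
      = (2*A - 4*B*(Real.sign t * |t|) - 2 * |t| * A / σ + 2 * Real.sign t * B * σ)^2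
      + (2*B + 4*A*(Real.sign t * |t|) - 2 * |t| * B / σ - 2 * Real.sign t * A * σ)^2 := by
        rw [← hst]
    _ = 4*(σ - |t|)^2 + 4*σ^2*(σ - 2 * |t|)^2 := keyBI' σ A B _ _ hσ hσsq hs2

/-- Assumption 4 of Theorem 1 holds for the Brockett integrator: for every `Δ > 0` and
`r > 0` there is `a > 0` such that the Euclidean norm of `ḡ(x)` is at least `a` for all
`x ∉ C` with `Q(x) ≥ Δ` and `|x| ≤ r`. -/
theorem gbarBI_bounded_below (Δ r : ℝ) (hΔ : 0 < Δ) (hr : 0 < r) :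
    ∃ a : ℝ, 0 < a ∧ ∀ x : EuclideanSpace ℝ (Fin 3), x ∉ CBI → Δ ≤ QBI x → ‖x‖ ≤ r →
      a ≤ Real.sqrt ((gbarBI x).1 ^ 2 + (gbarBI x).2 ^ 2) := by
  set m : ℝ := min (Δ/2) (Δ^2/16) with hm
  have hmpos : 0 < m := lt_min (by positivity) (by positivity)
  refine ⟨Real.sqrt m, Real.sqrt_pos.mpr hmpos, ?_⟩
  intro x hC hQ _
  have hσsq : (sigmaBI x)^2 = x 0 ^ 2 + x 1 ^ 2 := by
    rw [sigmaBI, Real.sq_sqrt (by positivity)]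
  -- it suffices to show `m ≤ sum of squares`
  have main : m ≤ (gbarBI x).1 ^ 2 + (gbarBI x).2 ^ 2 := by
    by_cases hx2 : x 2 = 0
    · -- here `ḡ x = (2x₀, 2x₁)` and `Q x = σ(x)²`
      have hgb : gbarBI x = (2 * x 0, 2 * x 1) := by rw [gbarBI, if_pos hx2]
      have hQx : QBI x = (sigmaBI x)^2 := by
        simp [QBI, hx2]
      rw [hgb]
      simp only
      have h4 : Δ ≤ (sigmaBI x)^2 := hQx ▸ hQ
      calc m ≤ Δ/2 := min_le_left _ _
        _ ≤ 4 * (sigmaBI x)^2 := by linarith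
        _ = (2 * x 0)^2 + (2 * x 1)^2 := by rw [hσsq]; ring
    · -- here `σ(x) ≠ 0` since `x ∉ C`
      have hσ : sigmaBI x ≠ 0 := by
        intro h; exact hC ⟨h, hx2⟩
      have hgb : gbarBI x = (g1BI x, g2BI x) := by rw [gbarBI, if_neg hx2]
      rw [hgb]
      simp only
      have hkey : g1BI x ^ 2 + g2BI x ^ 2
          = 4*(sigmaBI x - |x 2|)^2 + 4*(sigmaBI x)^2*(sigmaBI x - 2 * |x 2|)^2 := by
        rw [g1BI, g2BI]
        exact keyBI (sigmaBI x) (x 0) (x 1) (x 2) hσ hσsq hx2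
      rw [hkey]
      set σ := sigmaBI x
      set τ := |x 2| with hτ
      have hQ' : Δ ≤ (σ - τ)^2 + τ^2 := by
        have : QBI x = (σ - τ)^2 + τ^2 := by rw [QBI, hτ, sq_abs]
        linarith [this ▸ hQ]
      by_cases hcase : Δ/8 ≤ (σ - τ)^2
      · calc m ≤ Δ/2 := min_le_left _ _
          _ ≤ 4*(σ - τ)^2 + 4*σ^2*(σ - 2*τ)^2 := by nlinarith [sq_nonneg (σ*(σ-2*τ))]
      · push_neg at hcase
        have hb : 3*Δ/4 ≤ σ*(2*τ-σ) := by nlinarith [hQ', hcase]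
        have hb2 : (3*Δ/4)^2 ≤ (σ*(2*τ-σ))^2 := by nlinarith [hb, hΔ]
        calc m ≤ Δ^2/16 := min_le_right _ _
          _ ≤ 4*(σ - τ)^2 + 4*σ^2*(σ - 2*τ)^2 := by nlinarith [hb2, sq_nonneg (σ-τ), hΔ]
  calc Real.sqrt m ≤ Real.sqrt ((gbarBI x).1 ^ 2 + (gbarBI x).2 ^ 2) :=
        Real.sqrt_le_sqrt main
end

section
/- The set-valued map G : ℝ³ ⇉ ℝ² is upper semicontinuous: for every x ∈ ℝ³ and every open set V ⊆ ℝ² with G(x) ⊆ V, there exists δ > 0 such that G(y) ⊆ V for every y ∈ ℝ³ with |y − x| < δ. -/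
/-- The set-valued map `G : ℝ³ ⇉ ℝ²`: `G(x) = {g(x)}` if `σ(x) ≠ 0` and `x₃ ≠ 0`;
`G(x) = {(2x₁, 2x₂), (2x₁ + 2x₂σ(x), 2x₂ − 2x₁σ(x)), (2x₁ − 2x₂σ(x), 2x₂ + 2x₁σ(x))}` if
`x₃ = 0`; and `G(x) = {−2|x₃|w : |w| = 1}` if `σ(x) = 0` and `x₃ ≠ 0`. -/
noncomputable def GBI (x : EuclideanSpace ℝ (Fin 3)) : Set (ℝ × ℝ) :=
  if x 2 = 0 then
    {(2 * x 0, 2 * x 1),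
     (2 * x 0 + 2 * x 1 * sigmaBI x, 2 * x 1 - 2 * x 0 * sigmaBI x),
     (2 * x 0 - 2 * x 1 * sigmaBI x, 2 * x 1 + 2 * x 0 * sigmaBI x)}
  else if sigmaBI x = 0 then
    {p : ℝ × ℝ | ∃ w₁ w₂ : ℝ, w₁ ^ 2 + w₂ ^ 2 = 1 ∧
      p = (-2 * |x 2| * w₁, -2 * |x 2| * w₂)}
  else {(g1BI x, g2BI x)}


lemma sigma_nonneg (x : EuclideanSpace ℝ (Fin 3)) : 0 ≤ sigmaBI x := Real.sqrt_nonneg _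

lemma sigma_sq (x : EuclideanSpace ℝ (Fin 3)) : sigmaBI x ^ 2 = x 0 ^ 2 + x 1 ^ 2 :=
  Real.sq_sqrt (by positivity)

lemma abs0_le_sigma (x : EuclideanSpace ℝ (Fin 3)) : |x 0| ≤ sigmaBI x := by
  rw [← Real.sqrt_sq_eq_abs]; exact Real.sqrt_le_sqrt (by nlinarith [sq_nonneg (x 1)])

lemma abs1_le_sigma (x : EuclideanSpace ℝ (Fin 3)) : |x 1| ≤ sigmaBI x := by
  rw [← Real.sqrt_sq_eq_abs]; exact Real.sqrt_le_sqrt (by nlinarith [sq_nonneg (x 0)])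

lemma sigma_le (x : EuclideanSpace ℝ (Fin 3)) : sigmaBI x ≤ |x 0| + |x 1| := by
  rw [show |x 0| + |x 1| = Real.sqrt ((|x 0| + |x 1|)^2) from
    (Real.sqrt_sq (by positivity)).symm]
  exact Real.sqrt_le_sqrt (by nlinarith [abs_nonneg (x 0), abs_nonneg (x 1), sq_abs (x 0), sq_abs (x 1), mul_nonneg (abs_nonneg (x 0)) (abs_nonneg (x 1))])

lemma sigma_eq_zero (x : EuclideanSpace ℝ (Fin 3)) (h : sigmaBI x = 0) : x 0 = 0 ∧ x 1 = 0 := by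
  have := Real.sqrt_eq_zero (by positivity : (0:ℝ) ≤ x 0 ^2 + x 1^2) |>.mp h
  constructor <;> nlinarith [sq_nonneg (x 0), sq_nonneg (x 1)]

lemma sigma_sub_le (x y : EuclideanSpace ℝ (Fin 3)) :
    sigmaBI y ≤ sigmaBI x + (|y 0 - x 0| + |y 1 - x 1|) := by
  have h0 := abs0_le_sigma x
  have h1 := abs1_le_sigma x
  have hs := sigma_sq x
  have hn := sigma_nonneg x
  rw [show sigmaBI x + (|y 0 - x 0| + |y 1 - x 1|) =
    Real.sqrt ((sigmaBI x + (|y 0 - x 0| + |y 1 - x 1|))^2) from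
    (Real.sqrt_sq (by positivity)).symm]
  apply Real.sqrt_le_sqrt
  nlinarith [le_abs_self (y 0 - x 0), neg_abs_le (y 0 - x 0),
    le_abs_self (y 1 - x 1), neg_abs_le (y 1 - x 1),
    le_abs_self (x 0), neg_abs_le (x 0), le_abs_self (x 1), neg_abs_le (x 1),
    abs_nonneg (y 0 - x 0), abs_nonneg (y 1 - x 1),
    mul_nonneg (abs_nonneg (y 0 - x 0)) (abs_nonneg (y 1 - x 1)),
    sq_abs (y 0 - x 0), sq_abs (y 1 - x 1)]

lemma sigma_lip (x y : EuclideanSpace ℝ (Fin 3)) :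
    |sigmaBI y - sigmaBI x| ≤ |y 0 - x 0| + |y 1 - x 1| := by
  rw [abs_sub_le_iff]
  constructor
  · linarith [sigma_sub_le x y]
  · have := sigma_sub_le y x
    rw [abs_sub_comm (x 0), abs_sub_comm (x 1)] at this
    linarith

lemma coord_le_norm (z : EuclideanSpace ℝ (Fin 3)) (i : Fin 3) : |z i| ≤ ‖z‖ := by
  rw [EuclideanSpace.norm_eq, ← Real.sqrt_sq_eq_abs]
  apply Real.sqrt_le_sqrt
  have : z i ^ 2 = ‖z i‖ ^ 2 := by rw [Real.norm_eq_abs, sq_abs]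
  rw [this]
  exact Finset.single_le_sum (f := fun j => ‖z j‖^2) (fun j _ => by positivity) (Finset.mem_univ i)

lemma coord_sub_le_norm (y x : EuclideanSpace ℝ (Fin 3)) (i : Fin 3) : |y i - x i| ≤ ‖y - x‖ := by
  have := coord_le_norm (y - x) i
  simpa using this

lemma abs_sign_le (t : ℝ) : |Real.sign t| ≤ 1 := by
  rcases lt_trichotomy t 0 with h|h|h
  · rw [Real.sign_of_neg h]; norm_num
  · simp [h, Real.sign_zero]
  · rw [Real.sign_of_pos h]; norm_num

lemma circle_isCompact (r : ℝ) :
    IsCompact {p : ℝ × ℝ | ∃ w₁ w₂ : ℝ, w₁ ^ 2 + w₂ ^ 2 = 1 ∧ p = (-2 * r * w₁, -2 * r * w₂)} := by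
  have hS : IsCompact {w : ℝ × ℝ | w.1 ^ 2 + w.2 ^ 2 = 1} := by
    apply Metric.isCompact_of_isClosed_isBounded
    · exact isClosed_eq (by fun_prop) continuous_const
    · rw [Metric.isBounded_iff_subset_closedBall (0 : ℝ × ℝ)]
      refine ⟨1, fun w hw => ?_⟩
      simp only [Set.mem_setOf_eq] at hw
      simp only [Metric.mem_closedBall, dist_zero_right, Prod.norm_def, Real.norm_eq_abs,
        max_le_iff]
      constructor
      · rw [← Real.sqrt_one, ← Real.sqrt_sq_eq_abs]
        exact Real.sqrt_le_sqrt (by nlinarith [sq_nonneg w.2])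
      · rw [← Real.sqrt_one, ← Real.sqrt_sq_eq_abs]
        exact Real.sqrt_le_sqrt (by nlinarith [sq_nonneg w.1])
  have himg := hS.image (f := fun w : ℝ × ℝ => ((-2 * r * w.1, -2 * r * w.2) : ℝ × ℝ))
    (by fun_prop)
  convert himg using 1
  ext p
  constructor
  · rintro ⟨w₁, w₂, hw, rfl⟩; exact ⟨(w₁, w₂), hw, rfl⟩
  · rintro ⟨⟨w₁, w₂⟩, hw, rfl⟩; exact ⟨w₁, w₂, hw, rfl⟩


lemma sigma_continuous : Continuous sigmaBI := by
  apply Real.continuous_sqrt.comp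
  exact (((EuclideanSpace.proj (0 : Fin 3)).continuous).pow 2).add
    (((EuclideanSpace.proj (1 : Fin 3)).continuous).pow 2)

lemma proj_continuous (i : Fin 3) : Continuous (fun y : EuclideanSpace ℝ (Fin 3) => y i) :=
  (EuclideanSpace.proj i).continuous

lemma sign_eq_of_close {a b : ℝ} (ha : a ≠ 0) (h : |b - a| < |a|) : Real.sign b = Real.sign a := by
  rcases lt_or_gt_of_ne ha with h1 | h1
  · have hb : b < 0 := by cases abs_sub_lt_iff.mp h; cases abs_cases a <;> linarith
    rw [Real.sign_of_neg hb, Real.sign_of_neg h1]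
  · have hb : 0 < b := by cases abs_sub_lt_iff.mp h; cases abs_cases a <;> linarith
    rw [Real.sign_of_pos hb, Real.sign_of_pos h1]


lemma abs_w_le {w₁ w₂ : ℝ} (h : w₁ ^ 2 + w₂ ^ 2 = 1) : |w₁| ≤ 1 ∧ |w₂| ≤ 1 := by
  constructor <;> [skip; skip] <;>
  · rw [← Real.sqrt_one, ← Real.sqrt_sq_eq_abs]
    exact Real.sqrt_le_sqrt (by nlinarith [sq_nonneg w₁, sq_nonneg w₂])


set_option maxHeartbeats 2000000 in
theorem caseC (x : EuclideanSpace ℝ (Fin 3)) (V : Set (ℝ × ℝ)) (hV : IsOpen V)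
    (hGV : GBI x ⊆ V) (hx2 : ¬ x 2 = 0) (hσ : sigmaBI x = 0) :
    ∃ δ : ℝ, 0 < δ ∧ ∀ y : EuclideanSpace ℝ (Fin 3), ‖y - x‖ < δ → GBI y ⊆ V := by
  obtain ⟨ha, hb⟩ := sigma_eq_zero x hσ
  have hKdef : GBI x = {p : ℝ × ℝ | ∃ w₁ w₂ : ℝ, w₁ ^ 2 + w₂ ^ 2 = 1 ∧
      p = (-2 * |x 2| * w₁, -2 * |x 2| * w₂)} := by
    unfold GBI; rw [if_neg hx2, if_pos hσ]
  have hK : IsCompact (GBI x) := hKdef ▸ circle_isCompact |x 2|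
  obtain ⟨ε, hε, hth⟩ := hK.exists_thickening_subset_open hV hGV
  set M : ℝ := |x 2| + 1 with hM
  have hM1 : (1:ℝ) ≤ M := by rw [hM]; linarith [abs_nonneg (x 2)]
  have habs : 0 < |x 2| := abs_pos.mpr hx2
  refine ⟨min (|x 2| / 2) (min 1 (ε / (40 * M))),
    lt_min (by linarith) (lt_min one_pos (div_pos hε (by positivity))), fun y hy => ?_⟩
  have d0 : |y 0| < min (|x 2|/2) (min 1 (ε/(40*M))) := by
    have := coord_sub_le_norm y x 0; rw [ha] at this; simpa using lt_of_le_of_lt this hy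
  have d1 : |y 1| < min (|x 2|/2) (min 1 (ε/(40*M))) := by
    have := coord_sub_le_norm y x 1; rw [hb] at this; simpa using lt_of_le_of_lt this hy
  have d2 : |y 2 - x 2| < min (|x 2|/2) (min 1 (ε/(40*M))) := lt_of_le_of_lt (coord_sub_le_norm y x 2) hy
  set δ : ℝ := min (|x 2|/2) (min 1 (ε/(40*M))) with hδdef
  have hδ1 : δ ≤ 1 := le_trans (min_le_right _ _) (min_le_left _ _)
  have hδε : 40 * M * δ ≤ ε := by
    have h : δ ≤ ε / (40*M) :=
      le_trans (min_le_right (|x 2|/2) (min 1 (ε/(40*M)))) (min_le_right 1 (ε/(40*M)))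
    calc 40 * M * δ ≤ 40 * M * (ε / (40*M)) := by
          apply mul_le_mul_of_nonneg_left h; positivity
      _ = ε := by field_simp
  have hδc : δ ≤ |x 2| / 2 := min_le_left _ _
  have hδ0 : 0 < δ := by rw [hδdef]; have := abs_pos.mpr hx2; positivity
  have hy2abs : |x 2| / 2 ≤ |y 2| := by
    have := abs_sub_abs_le_abs_sub (x 2) (y 2)
    rw [abs_sub_comm] at d2
    linarith [lt_of_lt_of_le d2 hδc]
  have hy2 : y 2 ≠ 0 := by
    intro h; rw [h, abs_zero] at hy2abs; have := abs_pos.mpr hx2; linarith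
  have hy2M : |y 2| ≤ M := by
    have := abs_sub_abs_le_abs_sub (y 2) (x 2)
    rw [hM]; linarith [lt_of_lt_of_le d2 hδ1]
  have hd2a : |(|y 2|) - (|x 2|)| ≤ δ := le_trans (abs_abs_sub_abs_le_abs_sub _ _) (le_of_lt d2)
  have hMδpos : (0:ℝ) < M * δ := by positivity
  have hδMδ : δ ≤ M * δ := by nlinarith
  have h40 : 40 * (M * δ) ≤ ε := by linarith
  -- two subcases on σ(y)
  unfold GBI
  rw [if_neg hy2]
  by_cases hσy : sigmaBI y = 0
  · rw [if_pos hσy]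
    rintro p ⟨w₁, w₂, hw, rfl⟩
    obtain ⟨hw1, hw2⟩ := abs_w_le hw
    apply hth
    rw [Metric.mem_thickening_iff]
    refine ⟨(-2 * |x 2| * w₁, -2 * |x 2| * w₂), hKdef ▸ ⟨w₁, w₂, hw, rfl⟩, ?_⟩
    rw [Prod.dist_eq, Real.dist_eq, Real.dist_eq]
    apply max_lt
    · have : -2 * |y 2| * w₁ - -2 * |x 2| * w₁ = (|x 2| - |y 2|) * (2 * w₁) := by ring
      rw [this, abs_mul]
      have h1 : |(|x 2|) - (|y 2|)| ≤ δ := by rwa [abs_sub_comm] at hd2a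
      have h2 : |2 * w₁| ≤ 2 := by rw [abs_mul]; simpa using by linarith
      have := mul_le_mul h1 h2 (abs_nonneg _) hδ0.le
      linarith
    · have : -2 * |y 2| * w₂ - -2 * |x 2| * w₂ = (|x 2| - |y 2|) * (2 * w₂) := by ring
      rw [this, abs_mul]
      have h1 : |(|x 2|) - (|y 2|)| ≤ δ := by rwa [abs_sub_comm] at hd2a
      have h2 : |2 * w₂| ≤ 2 := by rw [abs_mul]; simpa using by linarith
      have := mul_le_mul h1 h2 (abs_nonneg _) hδ0.le
      linarith
  · rw [if_neg hσy]
    have hσypos : 0 < sigmaBI y := lt_of_le_of_ne (sigma_nonneg y) (Ne.symm hσy)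
    set u : ℝ := y 0 / sigmaBI y with hu
    set v : ℝ := y 1 / sigmaBI y with hv
    have huv : u ^ 2 + v ^ 2 = 1 := by
      rw [hu, hv, div_pow, div_pow, ← add_div, ← sigma_sq y, div_self (by positivity)]
    obtain ⟨hu1, hv1⟩ := abs_w_le huv
    have hσyle : sigmaBI y ≤ 2 * δ := by
      have := sigma_le y; linarith [d0, d1, le_of_lt d0, le_of_lt d1]
    intro p hp
    rw [Set.mem_singleton_iff] at hp
    subst hp
    apply hth
    rw [Metric.mem_thickening_iff]
    refine ⟨(-2 * |x 2| * u, -2 * |x 2| * v), hKdef ▸ ⟨u, v, huv, rfl⟩, ?_⟩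
    rw [Prod.dist_eq, Real.dist_eq, Real.dist_eq]
    dsimp only
    have hg1 : g1BI y = 2 * y 0 - 4 * (y 1 * y 2) - 2 * |y 2| * u
        + 2 * (Real.sign (y 2) * y 1 * sigmaBI y) := by
      rw [hu]; unfold g1BI; ring
    have hg2 : g2BI y = 2 * y 1 + 4 * (y 0 * y 2) - 2 * |y 2| * v
        - 2 * (Real.sign (y 2) * y 0 * sigmaBI y) := by
      rw [hv]; unfold g2BI; ring
    have hA1 : |y 1 * y 2| ≤ M * δ := by
      rw [abs_mul]
      calc |y 1| * |y 2| ≤ δ * M := mul_le_mul d1.le hy2M (abs_nonneg _) hδ0.le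
        _ = M * δ := mul_comm _ _
    have hA0 : |y 0 * y 2| ≤ M * δ := by
      rw [abs_mul]
      calc |y 0| * |y 2| ≤ δ * M := mul_le_mul d0.le hy2M (abs_nonneg _) hδ0.le
        _ = M * δ := mul_comm _ _
    have hB1 : |Real.sign (y 2) * y 1 * sigmaBI y| ≤ 2 * δ := by
      rw [abs_mul, abs_mul, abs_of_nonneg (sigma_nonneg y)]
      have h1 : |Real.sign (y 2)| * |y 1| ≤ 1 * δ :=
        mul_le_mul (abs_sign_le _) d1.le (abs_nonneg _) zero_le_one
      have h2 : |Real.sign (y 2)| * |y 1| * sigmaBI y ≤ 1 * δ * (2 * δ) :=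
        mul_le_mul h1 hσyle (sigma_nonneg y) (by positivity)
      calc |Real.sign (y 2)| * |y 1| * sigmaBI y ≤ 1 * δ * (2 * δ) := h2
        _ = 2 * (δ * δ) := by ring
        _ ≤ 2 * (1 * δ) := by
            apply mul_le_mul_of_nonneg_left (mul_le_mul_of_nonneg_right hδ1 hδ0.le)
            norm_num
        _ = 2 * δ := by ring
    have hB0 : |Real.sign (y 2) * y 0 * sigmaBI y| ≤ 2 * δ := by
      rw [abs_mul, abs_mul, abs_of_nonneg (sigma_nonneg y)]
      have h1 : |Real.sign (y 2)| * |y 0| ≤ 1 * δ :=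
        mul_le_mul (abs_sign_le _) d0.le (abs_nonneg _) zero_le_one
      have h2 : |Real.sign (y 2)| * |y 0| * sigmaBI y ≤ 1 * δ * (2 * δ) :=
        mul_le_mul h1 hσyle (sigma_nonneg y) (by positivity)
      calc |Real.sign (y 2)| * |y 0| * sigmaBI y ≤ 1 * δ * (2 * δ) := h2
        _ = 2 * (δ * δ) := by ring
        _ ≤ 2 * (1 * δ) := by
            apply mul_le_mul_of_nonneg_left (mul_le_mul_of_nonneg_right hδ1 hδ0.le)
            norm_num
        _ = 2 * δ := by ring
    have hCu : |(|x 2|) * u - (|y 2|) * u| ≤ δ := by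
      have e : (|x 2|) * u - (|y 2|) * u = ((|x 2|) - (|y 2|)) * u := by ring
      rw [e, abs_mul, abs_sub_comm]
      have := mul_le_mul hd2a hu1 (abs_nonneg _) hδ0.le
      linarith
    have hCv : |(|x 2|) * v - (|y 2|) * v| ≤ δ := by
      have e : (|x 2|) * v - (|y 2|) * v = ((|x 2|) - (|y 2|)) * v := by ring
      rw [e, abs_mul, abs_sub_comm]
      have := mul_le_mul hd2a hv1 (abs_nonneg _) hδ0.le
      linarith
    have hMδ : 12 * (M * δ) < ε := by linarith
    apply max_lt
    · rw [hg1, abs_lt]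
      obtain ⟨e1, e2⟩ := abs_lt.mp d0
      obtain ⟨f1, f2⟩ := abs_le.mp hA1
      obtain ⟨g1, g2⟩ := abs_le.mp hB1
      obtain ⟨k1, k2⟩ := abs_le.mp hCu
      constructor <;> linarith
    · rw [hg2, abs_lt]
      obtain ⟨e1, e2⟩ := abs_lt.mp d1
      obtain ⟨f1, f2⟩ := abs_le.mp hA0
      obtain ⟨g1, g2⟩ := abs_le.mp hB0
      obtain ⟨k1, k2⟩ := abs_le.mp hCv
      constructor <;> linarith

set_option maxHeartbeats 2000000 in
theorem caseB (x : EuclideanSpace ℝ (Fin 3)) (V : Set (ℝ × ℝ)) (hV : IsOpen V)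
    (hGV : GBI x ⊆ V) (hx2 : x 2 = 0) :
    ∃ δ : ℝ, 0 < δ ∧ ∀ y : EuclideanSpace ℝ (Fin 3), ‖y - x‖ < δ → GBI y ⊆ V := by
  have hGx : GBI x = {(2 * x 0, 2 * x 1),
     (2 * x 0 + 2 * x 1 * sigmaBI x, 2 * x 1 - 2 * x 0 * sigmaBI x),
     (2 * x 0 - 2 * x 1 * sigmaBI x, 2 * x 1 + 2 * x 0 * sigmaBI x)} := by
    unfold GBI; rw [if_pos hx2]
  have hP0 : (2 * x 0, 2 * x 1) ∈ V := hGV (hGx ▸ by simp)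
  have hPp : (2 * x 0 + 2 * x 1 * sigmaBI x, 2 * x 1 - 2 * x 0 * sigmaBI x) ∈ V :=
    hGV (hGx ▸ by simp)
  have hPm : (2 * x 0 - 2 * x 1 * sigmaBI x, 2 * x 1 + 2 * x 0 * sigmaBI x) ∈ V :=
    hGV (hGx ▸ by simp)
  rw [Metric.isOpen_iff] at hV
  obtain ⟨ε₀, hε₀, hb₀⟩ := hV _ hP0
  obtain ⟨ε₁, hε₁, hb₁⟩ := hV _ hPp
  obtain ⟨ε₂, hε₂, hb₂⟩ := hV _ hPm
  set ε : ℝ := min ε₀ (min ε₁ ε₂) with hεdef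
  have hε : 0 < ε := lt_min hε₀ (lt_min hε₁ hε₂)
  have hεe0 : ε ≤ ε₀ := min_le_left _ _
  have hεe1 : ε ≤ ε₁ := le_trans (min_le_right _ _) (min_le_left _ _)
  have hεe2 : ε ≤ ε₂ := le_trans (min_le_right _ _) (min_le_right _ _)
  set M : ℝ := |x 0| + |x 1| + 1 with hM
  have hM1 : (1:ℝ) ≤ M := by rw [hM]; linarith [abs_nonneg (x 0), abs_nonneg (x 1)]
  have hMpos : (0:ℝ) < M := lt_of_lt_of_le one_pos hM1
  have hsM : sigmaBI x ≤ M := by rw [hM]; linarith [sigma_le x]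
  refine ⟨min 1 (ε / (40 * M)), lt_min one_pos (div_pos hε (by positivity)), fun y hy => ?_⟩
  set δ : ℝ := min 1 (ε / (40 * M)) with hδdef
  have hδ0 : 0 < δ := lt_min one_pos (div_pos hε (by positivity))
  have hδ1 : δ ≤ 1 := min_le_left _ _
  have hδε : 40 * M * δ ≤ ε := by
    have h : δ ≤ ε / (40 * M) := min_le_right 1 (ε / (40 * M))
    calc 40 * M * δ ≤ 40 * M * (ε / (40 * M)) := by
          apply mul_le_mul_of_nonneg_left h; positivity
      _ = ε := by field_simp
  have hMδpos : (0:ℝ) < M * δ := by positivity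
  have hδMδ : δ ≤ M * δ := by nlinarith
  have h40 : 40 * (M * δ) ≤ ε := by linarith
  have d0 : |y 0 - x 0| < δ := lt_of_le_of_lt (coord_sub_le_norm y x 0) hy
  have d1 : |y 1 - x 1| < δ := lt_of_le_of_lt (coord_sub_le_norm y x 1) hy
  have d2 : |y 2| < δ := by
    have := coord_sub_le_norm y x 2; rw [hx2] at this
    simpa using lt_of_le_of_lt this hy
  have hσd : |sigmaBI y - sigmaBI x| ≤ 2 * δ := by
    have := sigma_lip x y; linarith [d0, d1]
  have hσyM : sigmaBI y ≤ 3 * M := by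
    obtain ⟨u1, u2⟩ := abs_le.mp hσd
    linarith [hsM, hδ1, hδMδ, hδ0.le]
  have hy0M : |y 0| ≤ M := by
    have := abs_sub_abs_le_abs_sub (y 0) (x 0)
    rw [hM]; linarith [d0.le, hδ1, abs_nonneg (x 1)]
  have hy1M : |y 1| ≤ M := by
    have := abs_sub_abs_le_abs_sub (y 1) (x 1)
    rw [hM]; linarith [d1.le, hδ1, abs_nonneg (x 0)]
  have hprod1 : |y 1 * sigmaBI y - x 1 * sigmaBI x| ≤ 5 * (M * δ) := by
    have e : y 1 * sigmaBI y - x 1 * sigmaBI x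
        = (y 1 - x 1) * sigmaBI y + x 1 * (sigmaBI y - sigmaBI x) := by ring
    rw [e]
    refine le_trans (abs_add_le _ _) ?_
    rw [abs_mul, abs_mul]
    have h1 : |y 1 - x 1| * |sigmaBI y| ≤ δ * (3 * M) := by
      rw [abs_of_nonneg (sigma_nonneg y)]
      exact mul_le_mul d1.le hσyM (sigma_nonneg y) hδ0.le
    have h2 : |x 1| * |sigmaBI y - sigmaBI x| ≤ M * (2 * δ) := by
      apply mul_le_mul _ hσd (abs_nonneg _) hMpos.le
      rw [hM]; linarith [abs_nonneg (x 0)]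
    nlinarith
  have hprod0 : |y 0 * sigmaBI y - x 0 * sigmaBI x| ≤ 5 * (M * δ) := by
    have e : y 0 * sigmaBI y - x 0 * sigmaBI x
        = (y 0 - x 0) * sigmaBI y + x 0 * (sigmaBI y - sigmaBI x) := by ring
    rw [e]
    refine le_trans (abs_add_le _ _) ?_
    rw [abs_mul, abs_mul]
    have h1 : |y 0 - x 0| * |sigmaBI y| ≤ δ * (3 * M) := by
      rw [abs_of_nonneg (sigma_nonneg y)]
      exact mul_le_mul d0.le hσyM (sigma_nonneg y) hδ0.le
    have h2 : |x 0| * |sigmaBI y - sigmaBI x| ≤ M * (2 * δ) := by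
      apply mul_le_mul _ hσd (abs_nonneg _) hMpos.le
      rw [hM]; linarith [abs_nonneg (x 1)]
    nlinarith
  by_cases hy2 : y 2 = 0
  · -- three points
    unfold GBI
    rw [if_pos hy2]
    intro p hp
    simp only [Set.mem_insert_iff, Set.mem_singleton_iff] at hp
    rcases hp with rfl | rfl | rfl
    · apply hb₀
      rw [Metric.mem_ball, Prod.dist_eq, Real.dist_eq, Real.dist_eq]
      dsimp only
      apply max_lt
      · obtain ⟨u1, u2⟩ := abs_lt.mp d0
        rw [abs_lt]; constructor <;> linarith
      · obtain ⟨u1, u2⟩ := abs_lt.mp d1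
        rw [abs_lt]; constructor <;> linarith
    · apply hb₁
      rw [Metric.mem_ball, Prod.dist_eq, Real.dist_eq, Real.dist_eq]
      dsimp only
      apply max_lt
      · obtain ⟨u1, u2⟩ := abs_lt.mp d0
        obtain ⟨v1, v2⟩ := abs_le.mp hprod1
        rw [abs_lt]; constructor <;> linarith
      · obtain ⟨u1, u2⟩ := abs_lt.mp d1
        obtain ⟨v1, v2⟩ := abs_le.mp hprod0
        rw [abs_lt]; constructor <;> linarith
    · apply hb₂
      rw [Metric.mem_ball, Prod.dist_eq, Real.dist_eq, Real.dist_eq]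
      dsimp only
      apply max_lt
      · obtain ⟨u1, u2⟩ := abs_lt.mp d0
        obtain ⟨v1, v2⟩ := abs_le.mp hprod1
        rw [abs_lt]; constructor <;> linarith
      · obtain ⟨u1, u2⟩ := abs_lt.mp d1
        obtain ⟨v1, v2⟩ := abs_le.mp hprod0
        rw [abs_lt]; constructor <;> linarith
  · unfold GBI
    rw [if_neg hy2]
    by_cases hσy : sigmaBI y = 0
    · rw [if_pos hσy]
      obtain ⟨hy0, hy1⟩ := sigma_eq_zero y hσy
      have hx0δ : |x 0| < δ := by rw [hy0] at d0; rwa [abs_sub_comm, sub_zero] at d0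
      have hx1δ : |x 1| < δ := by rw [hy1] at d1; rwa [abs_sub_comm, sub_zero] at d1
      rintro p ⟨w₁, w₂, hw, rfl⟩
      obtain ⟨hw1, hw2⟩ := abs_w_le hw
      have hA : |(|y 2|) * w₁| ≤ δ * 1 := by
        rw [abs_mul, abs_abs]
        exact mul_le_mul d2.le hw1 (abs_nonneg _) hδ0.le
      have hB : |(|y 2|) * w₂| ≤ δ * 1 := by
        rw [abs_mul, abs_abs]
        exact mul_le_mul d2.le hw2 (abs_nonneg _) hδ0.le
      apply hb₀
      rw [Metric.mem_ball, Prod.dist_eq, Real.dist_eq, Real.dist_eq]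
      dsimp only
      apply max_lt
      · obtain ⟨u1, u2⟩ := abs_le.mp hA
        obtain ⟨v1, v2⟩ := abs_lt.mp hx0δ
        rw [abs_lt]; constructor <;> linarith
      · obtain ⟨u1, u2⟩ := abs_le.mp hB
        obtain ⟨v1, v2⟩ := abs_lt.mp hx1δ
        rw [abs_lt]; constructor <;> linarith
    · rw [if_neg hσy]
      have hσypos : 0 < sigmaBI y := lt_of_le_of_ne (sigma_nonneg y) (Ne.symm hσy)
      have hQ0 : |(|y 2|) * (y 0 / sigmaBI y)| ≤ δ * 1 := by
        rw [abs_mul, abs_abs]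
        apply mul_le_mul d2.le _ (abs_nonneg _) hδ0.le
        rw [abs_div, abs_of_nonneg (sigma_nonneg y)]
        exact div_le_one_of_le₀ (abs0_le_sigma y) (sigma_nonneg y)
      have hQ1 : |(|y 2|) * (y 1 / sigmaBI y)| ≤ δ * 1 := by
        rw [abs_mul, abs_abs]
        apply mul_le_mul d2.le _ (abs_nonneg _) hδ0.le
        rw [abs_div, abs_of_nonneg (sigma_nonneg y)]
        exact div_le_one_of_le₀ (abs1_le_sigma y) (sigma_nonneg y)
      have hA1 : |y 1 * y 2| ≤ M * δ := by
        rw [abs_mul]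
        exact mul_le_mul hy1M d2.le (abs_nonneg _) hMpos.le
      have hA0 : |y 0 * y 2| ≤ M * δ := by
        rw [abs_mul]
        exact mul_le_mul hy0M d2.le (abs_nonneg _) hMpos.le
      intro p hp
      rw [Set.mem_singleton_iff] at hp
      subst hp
      rcases lt_trichotomy (y 2) 0 with hneg | hzero | hpos
      · -- sign = -1, target Pm
        have hs1 : Real.sign (y 2) = -1 := Real.sign_of_neg hneg
        have hg1 : g1BI y = 2 * y 0 - 4 * (y 1 * y 2) - 2 * ((|y 2|) * (y 0 / sigmaBI y))
            - 2 * (y 1 * sigmaBI y) := by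
          unfold g1BI; rw [hs1]; ring
        have hg2 : g2BI y = 2 * y 1 + 4 * (y 0 * y 2) - 2 * ((|y 2|) * (y 1 / sigmaBI y))
            + 2 * (y 0 * sigmaBI y) := by
          unfold g2BI; rw [hs1]; ring
        apply hb₂
        rw [Metric.mem_ball, Prod.dist_eq, Real.dist_eq, Real.dist_eq]
        dsimp only
        apply max_lt
        · obtain ⟨u1, u2⟩ := abs_lt.mp d0
          obtain ⟨v1, v2⟩ := abs_le.mp hprod1
          obtain ⟨w1, w2⟩ := abs_le.mp hA1
          obtain ⟨q1, q2⟩ := abs_le.mp hQ0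
          rw [hg1, abs_lt]; constructor <;> linarith
        · obtain ⟨u1, u2⟩ := abs_lt.mp d1
          obtain ⟨v1, v2⟩ := abs_le.mp hprod0
          obtain ⟨w1, w2⟩ := abs_le.mp hA0
          obtain ⟨q1, q2⟩ := abs_le.mp hQ1
          rw [hg2, abs_lt]; constructor <;> linarith
      · exact absurd hzero hy2
      · -- sign = 1, target Pp
        have hs1 : Real.sign (y 2) = 1 := Real.sign_of_pos hpos
        have hg1 : g1BI y = 2 * y 0 - 4 * (y 1 * y 2) - 2 * ((|y 2|) * (y 0 / sigmaBI y))
            + 2 * (y 1 * sigmaBI y) := by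
          unfold g1BI; rw [hs1]; ring
        have hg2 : g2BI y = 2 * y 1 + 4 * (y 0 * y 2) - 2 * ((|y 2|) * (y 1 / sigmaBI y))
            - 2 * (y 0 * sigmaBI y) := by
          unfold g2BI; rw [hs1]; ring
        apply hb₁
        rw [Metric.mem_ball, Prod.dist_eq, Real.dist_eq, Real.dist_eq]
        dsimp only
        apply max_lt
        · obtain ⟨u1, u2⟩ := abs_lt.mp d0
          obtain ⟨v1, v2⟩ := abs_le.mp hprod1
          obtain ⟨w1, w2⟩ := abs_le.mp hA1
          obtain ⟨q1, q2⟩ := abs_le.mp hQ0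
          rw [hg1, abs_lt]; constructor <;> linarith
        · obtain ⟨u1, u2⟩ := abs_lt.mp d1
          obtain ⟨v1, v2⟩ := abs_le.mp hprod0
          obtain ⟨w1, w2⟩ := abs_le.mp hA0
          obtain ⟨q1, q2⟩ := abs_le.mp hQ1
          rw [hg2, abs_lt]; constructor <;> linarith

theorem caseA (x : EuclideanSpace ℝ (Fin 3)) (V : Set (ℝ × ℝ)) (hV : IsOpen V)
    (hGV : GBI x ⊆ V) (hx2 : ¬ x 2 = 0) (hσ : ¬ sigmaBI x = 0) :
    ∃ δ : ℝ, 0 < δ ∧ ∀ y : EuclideanSpace ℝ (Fin 3), ‖y - x‖ < δ → GBI y ⊆ V := by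
  have hσpos : 0 < sigmaBI x := lt_of_le_of_ne (Real.sqrt_nonneg _) (Ne.symm hσ)
  have hgx : (g1BI x, g2BI x) ∈ V := by
    apply hGV; unfold GBI; rw [if_neg hx2, if_neg hσ]; rfl
  set s : ℝ := Real.sign (x 2) with hs
  set f : EuclideanSpace ℝ (Fin 3) → ℝ × ℝ := fun y =>
    (2 * y 0 - 4 * y 1 * y 2 - 2 * |y 2| * y 0 / sigmaBI y + 2 * s * y 1 * sigmaBI y,
     2 * y 1 + 4 * y 0 * y 2 - 2 * |y 2| * y 1 / sigmaBI y - 2 * s * y 0 * sigmaBI y) with hf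
  have hc0 := proj_continuous 0
  have hc1 := proj_continuous 1
  have hc2 := proj_continuous 2
  have hfc : ContinuousAt f x := by
    apply ContinuousAt.prodMk
    · apply ContinuousAt.add
      apply ContinuousAt.sub
      apply ContinuousAt.sub
      · exact ((continuous_const.mul hc0).continuousAt)
      · exact (((continuous_const.mul hc1).mul hc2).continuousAt)
      · exact ContinuousAt.div
          (((continuous_const.mul hc2.abs).mul hc0).continuousAt)
          (sigma_continuous.continuousAt) hσ
      · exact (((continuous_const.mul hc1).mul sigma_continuous).continuousAt)
    · apply ContinuousAt.sub
      apply ContinuousAt.sub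
      apply ContinuousAt.add
      · exact ((continuous_const.mul hc1).continuousAt)
      · exact (((continuous_const.mul hc0).mul hc2).continuousAt)
      · exact ContinuousAt.div
          (((continuous_const.mul hc2.abs).mul hc1).continuousAt)
          (sigma_continuous.continuousAt) hσ
      · exact (((continuous_const.mul hc0).mul sigma_continuous).continuousAt)
  have hfx : f x = (g1BI x, g2BI x) := by simp [hf, g1BI, g2BI, hs]
  have hev1 : ∀ᶠ y in nhds x, f y ∈ V := hfc.tendsto (hV.mem_nhds (hfx ▸ hgx))
  have hev2 : ∀ᶠ y in nhds x, |y 2 - x 2| < |x 2| := by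
    have := hc2.continuousAt (x := x) (Metric.ball_mem_nhds (x 2) (abs_pos.mpr hx2))
    filter_upwards [this] with y hy
    rwa [Set.mem_preimage, Metric.mem_ball, Real.dist_eq] at hy
  have hev3 : ∀ᶠ y in nhds x, 0 < sigmaBI y := by
    have := sigma_continuous.continuousAt (x := x)
      (Metric.ball_mem_nhds (sigmaBI x) hσpos) -- wrong: need lower bound
    filter_upwards [this] with y hy
    rw [Set.mem_preimage, Metric.mem_ball, Real.dist_eq] at hy
    cases abs_sub_lt_iff.mp hy
    linarith
  have hev : ∀ᶠ y in nhds x, GBI y ⊆ V := by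
    filter_upwards [hev1, hev2, hev3] with y h1 h2 h3
    have hy2 : y 2 ≠ 0 := by
      intro h; rw [h] at h2; simp at h2
    have hyσ : sigmaBI y ≠ 0 := ne_of_gt h3
    have hsign : Real.sign (y 2) = s := sign_eq_of_close hx2 h2
    have : GBI y = {(g1BI y, g2BI y)} := by unfold GBI; rw [if_neg hy2, if_neg hyσ]
    rw [this, Set.singleton_subset_iff]
    have : (g1BI y, g2BI y) = f y := by simp [hf, g1BI, g2BI, hsign]
    rw [this]; exact h1
  rw [Metric.eventually_nhds_iff] at hev
  obtain ⟨δ, hδ, h⟩ := hev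
  exact ⟨δ, hδ, fun y hy => h (by rwa [dist_eq_norm])⟩

/-- The set-valued map `G` is upper semicontinuous: for every `x` and every open
`V ⊆ ℝ²` with `G(x) ⊆ V` there is `δ > 0` such that `G(y) ⊆ V` whenever `|y − x| < δ`. -/
theorem GBI_upper_semicontinuous :
    ∀ x : EuclideanSpace ℝ (Fin 3), ∀ V : Set (ℝ × ℝ), IsOpen V → GBI x ⊆ V →
      ∃ δ : ℝ, 0 < δ ∧ ∀ y : EuclideanSpace ℝ (Fin 3), ‖y - x‖ < δ → GBI y ⊆ V := by
  intro x V hV hGV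
  by_cases hx2 : x 2 = 0
  · exact caseB x V hV hGV hx2
  by_cases hσ : sigmaBI x = 0
  · exact caseC x V hV hGV hx2 hσ
  · exact caseA x V hV hGV hx2 hσ
end

section
/- For the set-valued map G : ℝ³ ⇉ ℝ², one has 0 ∈ G(x) if and only if x = 0. -/
/-- `0 ∈ G(x)` if and only if `x = 0`. -/
theorem GBI_zero_mem_iff (x : EuclideanSpace ℝ (Fin 3)) :
    ((0 : ℝ), (0 : ℝ)) ∈ GBI x ↔ x = 0 := by
  set a := x 0 with ha
  set b := x 1 with hb
  set c := x 2 with hc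
  constructor
  · intro h
    by_cases hc0 : c = 0
    · simp only [GBI, ← hc, hc0, eq_self_iff_true, if_true, Set.mem_insert_iff, Set.mem_singleton_iff,
        Prod.mk.injEq] at h
      have hs : (0:ℝ) ≤ sigmaBI x := Real.sqrt_nonneg _
      have hab : a = 0 ∧ b = 0 := by
        rcases h with ⟨h1, h2⟩ | ⟨h1, h2⟩ | ⟨h1, h2⟩
        · exact ⟨by linarith, by linarith⟩
        · have hab : a ^ 2 + b ^ 2 = 0 := by
            linear_combination (a / 2) * h1.symm + (b / 2) * h2.symm
          constructor <;> nlinarith [sq_nonneg a, sq_nonneg b]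
        · have hab : a ^ 2 + b ^ 2 = 0 := by
            linear_combination (a / 2) * h1.symm + (b / 2) * h2.symm
          constructor <;> nlinarith [sq_nonneg a, sq_nonneg b]
      ext i
      fin_cases i
      · exact hab.1
      · exact hab.2
      · exact hc0
    · exfalso
      by_cases hs0 : sigmaBI x = 0
      · simp only [GBI, ← hc, if_neg hc0, if_pos hs0, Set.mem_setOf_eq, Prod.mk.injEq] at h
        obtain ⟨w1, w2, hw, h1, h2⟩ := h
        have habs : |c| ≠ 0 := abs_ne_zero.mpr hc0
        have hw1 : w1 = 0 := by
          rcases mul_eq_zero.mp h1.symm with h | h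
          · rcases mul_eq_zero.mp h with h | h
            · norm_num at h
            · exact absurd h habs
          · exact h
        have hw2 : w2 = 0 := by
          rcases mul_eq_zero.mp h2.symm with h | h
          · rcases mul_eq_zero.mp h with h | h
            · norm_num at h
            · exact absurd h habs
          · exact h
        rw [hw1, hw2] at hw; norm_num at hw
      · simp only [GBI, ← hc, if_neg hc0, if_neg hs0, Set.mem_singleton_iff,
          Prod.mk.injEq] at h
        obtain ⟨h1, h2⟩ := h
        simp only [g1BI, g2BI, ← ha, ← hb, ← hc] at h1 h2
        set s := sigmaBI x with hsdef
        have hsnn : (0:ℝ) ≤ s := Real.sqrt_nonneg _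
        have hspos : 0 < s := lt_of_le_of_ne hsnn (Ne.symm hs0)
        have hs2 : s ^ 2 = a ^ 2 + b ^ 2 := by
          rw [hsdef, sigmaBI, ← ha, ← hb]
          exact Real.sq_sqrt (by positivity)
        rcases lt_trichotomy c 0 with hcneg | hczero | hcpos
        · rw [Real.sign_of_neg hcneg, abs_of_neg hcneg] at h1 h2
          have H1 : 2*a*s - 4*b*c*s + 2*c*a - 2*b*s^2 = 0 := by
            field_simp at h1; linear_combination -h1
          have H2 : 2*b*s + 4*a*c*s + 2*c*b + 2*a*s^2 = 0 := by
            field_simp at h2; linear_combination -h2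
          have key1 : s ^ 2 * (s + c) = 0 := by
            linear_combination (a/2) * H1 + (b/2) * H2 + (s + c) * hs2
          have hsc : c = -s := by
            rcases mul_eq_zero.mp key1 with h | h
            · exact absurd h (by positivity)
            · linarith
          have key2 : -4*c*s^3 - 2*s^4 = 0 := by
            linear_combination b * H1 - a * H2 + (-4*c*s - 2*s^2) * hs2
          rw [hsc] at key2
          nlinarith [pow_pos hspos 4]
        · exact hc0 hczero
        · rw [Real.sign_of_pos hcpos, abs_of_pos hcpos] at h1 h2
          have H1 : 2*a*s - 4*b*c*s - 2*c*a + 2*b*s^2 = 0 := by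
            field_simp at h1; linear_combination -h1
          have H2 : 2*b*s + 4*a*c*s - 2*c*b - 2*a*s^2 = 0 := by
            field_simp at h2; linear_combination -h2
          have key1 : s ^ 2 * (s - c) = 0 := by
            linear_combination (a/2) * H1 + (b/2) * H2 + (s - c) * hs2
          have hsc : c = s := by
            rcases mul_eq_zero.mp key1 with h | h
            · exact absurd h (by positivity)
            · linarith
          have key2 : -4*c*s^3 + 2*s^4 = 0 := by
            linear_combination b * H1 - a * H2 + (-4*c*s + 2*s^2) * hs2
          rw [hsc] at key2
          nlinarith [pow_pos hspos 4]
  · intro h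
    subst h
    simp [GBI, sigmaBI]
end

section
/- Let γ > 0 and let x : [0, t₀) → ℝ³ be a continuously differentiable solution of the closed-loop Brockett system ẋ₁ = −γg₁(x)/|g(x)|, ẋ₂ = −γg₂(x)/|g(x)|, ẋ₃ = x₁ẋ₂ − x₂ẋ₁ with σ(x(t)) ≠ 0 and x₃(t) ≠ 0 for all t ∈ [0, t₀). Then the function t ↦ Q(x(t)) is strictly decreasing on [0, t₀) (indeed d/dt Q(x(t)) = −γ|g(x(t))| < 0 for all t ∈ [0, t₀)), and x is bounded on [0, t₀). -/
/-- Positivity of `g₁² + g₂²` off the planes. -/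
lemma brockett_g_pos (u v w σ ε G1 G2 : ℝ) (hσ : 0 < σ) (hσ2 : σ^2 = u^2+v^2)
    (hw : w ≠ 0) (hε : ε = -1 ∨ ε = 1)
    (hG1 : G1 = 2*u - 4*v*w - 2*(ε*w)*u/σ + 2*ε*v*σ)
    (hG2 : G2 = 2*v + 4*u*w - 2*(ε*w)*v/σ - 2*ε*u*σ) :
    0 < G1^2 + G2^2 := by
  by_contra h
  push_neg at h
  have h1 : G1 = 0 := by nlinarith [sq_nonneg G1, sq_nonneg G2]
  have h2 : G2 = 0 := by nlinarith [sq_nonneg G1, sq_nonneg G2]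
  have e1 : σ * G1 = 2*u*σ - 4*v*w*σ - 2*(ε*w)*u + 2*ε*v*σ^2 := by
    rw [hG1]; field_simp
  have e2 : σ * G2 = 2*v*σ + 4*u*w*σ - 2*(ε*w)*v - 2*ε*u*σ^2 := by
    rw [hG2]; field_simp
  rw [h1, mul_zero] at e1
  rw [h2, mul_zero] at e2
  have e1' : 2*u*σ - 4*v*w*σ - 2*(ε*w)*u + 2*ε*v*σ^2 = 0 := e1.symm
  have e2' : 2*v*σ + 4*u*w*σ - 2*(ε*w)*v - 2*ε*u*σ^2 = 0 := e2.symm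
  have hs1 : σ^2*(σ - ε*w) = 0 := by
    linear_combination (u/2)*e1' + (v/2)*e2' + (σ - ε*w)*hσ2
  have hs2 : σ^3*(2*w - ε*σ) = 0 := by
    linear_combination (u/2)*e2' - (v/2)*e1' + (2*w*σ - ε*σ^2)*hσ2
  have hσ2ne : σ^2 ≠ 0 := pow_ne_zero 2 hσ.ne'
  have hσ3ne : σ^3 ≠ 0 := pow_ne_zero 3 hσ.ne'
  have hσw : σ - ε*w = 0 := by
    rcases mul_eq_zero.mp hs1 with h | h
    · exact absurd h hσ2ne
    · exact h
  have h2w : 2*w - ε*σ = 0 := by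
    rcases mul_eq_zero.mp hs2 with h | h
    · exact absurd h hσ3ne
    · exact h
  rcases hε with h | h <;> rw [h] at hσw h2w <;> exact hw (by linarith)

/-- Key derivative algebra for the Brockett closed loop. -/
lemma brockett_key (γ u v w σ ε G1 G2 N : ℝ) (hσ : σ ≠ 0) (hN : N ≠ 0)
    (hε : ε = -1 ∨ ε = 1)
    (hG1 : G1 = 2*u - 4*v*w - 2*(ε*w)*u/σ + 2*ε*v*σ)
    (hG2 : G2 = 2*v + 4*u*w - 2*(ε*w)*v/σ - 2*ε*u*σ)
    (hN2 : N^2 = G1^2 + G2^2) :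
    2 * (σ - ε*w) * (1/(2*σ) * (2*u*(-γ*G1/N) + 2*v*(-γ*G2/N))
        - ε * (u*(-γ*G2/N) - v*(-γ*G1/N)))
      + 2 * w * (u*(-γ*G2/N) - v*(-γ*G1/N)) = -γ * N := by
  have h1 : 2 * (σ - ε*w) * (1/(2*σ) * (2*u*(-γ*G1/N) + 2*v*(-γ*G2/N))
        - ε * (u*(-γ*G2/N) - v*(-γ*G1/N)))
      + 2 * w * (u*(-γ*G2/N) - v*(-γ*G1/N))
      = G1 * (-γ*G1/N) + G2 * (-γ*G2/N) := by
    rw [hG1, hG2]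
    rcases hε with h | h <;> subst h <;> field_simp <;> ring
  rw [h1]
  have h2 : G1 * (-γ*G1/N) + G2 * (-γ*G2/N) = -γ*(G1^2+G2^2)/N := by ring
  rw [h2, ← hN2]
  field_simp



/-- The Euclidean norm `|g(x)|` of the speed-gradient vector. -/
noncomputable def ngBI (x : EuclideanSpace ℝ (Fin 3)) : ℝ :=
  Real.sqrt (g1BI x ^ 2 + g2BI x ^ 2)

/-- The right-hand side of the closed-loop Brockett system
`ẋ₁ = −γg₁(x)/|g(x)|, ẋ₂ = −γg₂(x)/|g(x)|, ẋ₃ = x₁ẋ₂ − x₂ẋ₁`. -/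
noncomputable def brockettRHS (γ : ℝ) (y : EuclideanSpace ℝ (Fin 3)) :
    EuclideanSpace ℝ (Fin 3) :=
  (WithLp.equiv 2 (Fin 3 → ℝ)).symm
    ![-γ * g1BI y / ngBI y,
      -γ * g2BI y / ngBI y,
      y 0 * (-γ * g2BI y / ngBI y) - y 1 * (-γ * g1BI y / ngBI y)]

/-- Along any continuously differentiable solution of the closed-loop Brockett system on
`[0, t₀)` (with `t₀ ≤ ∞`) staying off the planes `σ = 0` and `x₃ = 0`, the goal function
`Q` is strictly decreasing with `d/dt Q(x(t)) = −γ|g(x(t))| < 0`, and the solution is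
bounded. -/
theorem brockett_Q_strictly_decreasing (γ : ℝ) (hγ : 0 < γ) (t₀ : EReal)
    (x : ℝ → EuclideanSpace ℝ (Fin 3))
    (hode : ∀ t ∈ {s : ℝ | 0 ≤ s ∧ (s : EReal) < t₀},
      HasDerivWithinAt x (brockettRHS γ (x t)) {s : ℝ | 0 ≤ s ∧ (s : EReal) < t₀} t)
    (hoff : ∀ t ∈ {s : ℝ | 0 ≤ s ∧ (s : EReal) < t₀}, sigmaBI (x t) ≠ 0 ∧ x t 2 ≠ 0) :
    StrictAntiOn (fun t => QBI (x t)) {s : ℝ | 0 ≤ s ∧ (s : EReal) < t₀} ∧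
      (∀ t ∈ {s : ℝ | 0 ≤ s ∧ (s : EReal) < t₀},
        HasDerivWithinAt (fun s => QBI (x s)) (-γ * ngBI (x t))
          {s : ℝ | 0 ≤ s ∧ (s : EReal) < t₀} t ∧ -γ * ngBI (x t) < 0) ∧
      ∃ M : ℝ, ∀ t ∈ {s : ℝ | 0 ≤ s ∧ (s : EReal) < t₀}, ‖x t‖ ≤ M := by
  set S : Set ℝ := {s : ℝ | 0 ≤ s ∧ (s : EReal) < t₀} with hS
  -- main derivative statement
  have hmain : ∀ t ∈ S, HasDerivWithinAt (fun s => QBI (x s)) (-γ * ngBI (x t)) S t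
      ∧ -γ * ngBI (x t) < 0 := by
    intro t ht
    obtain ⟨hσne, hw0⟩ := hoff t ht
    set ε : ℝ := Real.sign (x t 2) with hεdef
    have hε : ε = -1 ∨ ε = 1 := Real.sign_apply_eq_of_ne_zero _ hw0
    have hεwt : |x t 2| = ε * x t 2 := by
      rcases lt_or_gt_of_ne hw0 with h | h
      · rw [abs_of_neg h, hεdef, Real.sign_of_neg h]; ring
      · rw [abs_of_pos h, hεdef, Real.sign_of_pos h]; ring
    have hq0' : (0:ℝ) ≤ x t 0 ^ 2 + x t 1 ^ 2 := by positivity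
    have hq0 : x t 0 ^ 2 + x t 1 ^ 2 ≠ 0 := by
      intro h
      exact hσne (by unfold sigmaBI; rw [h, Real.sqrt_zero])
    have hqpos : 0 < x t 0 ^ 2 + x t 1 ^ 2 := lt_of_le_of_ne hq0' (Ne.symm hq0)
    set σ : ℝ := Real.sqrt (x t 0 ^ 2 + x t 1 ^ 2) with hσdef
    have hσpos : 0 < σ := Real.sqrt_pos.mpr hqpos
    have hσ2 : σ ^ 2 = x t 0 ^ 2 + x t 1 ^ 2 := Real.sq_sqrt hq0'
    have hg1 : g1BI (x t) = 2*(x t 0) - 4*(x t 1)*(x t 2)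
        - 2*(ε*(x t 2))*(x t 0)/σ + 2*ε*(x t 1)*σ := by
      unfold g1BI sigmaBI
      rw [hεwt]
    have hg2 : g2BI (x t) = 2*(x t 1) + 4*(x t 0)*(x t 2)
        - 2*(ε*(x t 2))*(x t 1)/σ - 2*ε*(x t 0)*σ := by
      unfold g2BI sigmaBI
      rw [hεwt]
    have hgpos : 0 < g1BI (x t) ^ 2 + g2BI (x t) ^ 2 :=
      brockett_g_pos (x t 0) (x t 1) (x t 2) σ ε _ _ hσpos hσ2 hw0 hε hg1 hg2
    have hN2 : ngBI (x t) ^ 2 = g1BI (x t) ^ 2 + g2BI (x t) ^ 2 := by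
      unfold ngBI; exact Real.sq_sqrt hgpos.le
    have hNpos : 0 < ngBI (x t) := Real.sqrt_pos.mpr hgpos
    refine ⟨?_, by nlinarith⟩
    -- component derivatives
    have hRHS0 : brockettRHS γ (x t) 0 = -γ * g1BI (x t) / ngBI (x t) := by
      simp [brockettRHS]
    have hRHS1 : brockettRHS γ (x t) 1 = -γ * g2BI (x t) / ngBI (x t) := by
      simp [brockettRHS]
    have hRHS2 : brockettRHS γ (x t) 2 = x t 0 * (-γ * g2BI (x t) / ngBI (x t))
        - x t 1 * (-γ * g1BI (x t) / ngBI (x t)) := by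
      simp [brockettRHS]
    have hcomp : ∀ i : Fin 3,
        HasDerivWithinAt (fun s => x s i) (brockettRHS γ (x t) i) S t := by
      intro i
      exact (EuclideanSpace.proj i).hasFDerivAt.comp_hasDerivWithinAt t (hode t ht)
    have hu := hcomp 0; rw [hRHS0] at hu
    have hv := hcomp 1; rw [hRHS1] at hv
    have hw := hcomp 2; rw [hRHS2] at hw
    -- build the derivative of the smooth representative
    have hq : HasDerivWithinAt (fun s => x s 0 ^ 2 + x s 1 ^ 2)
        ((2:ℕ) * x t 0 ^ (2-1) * (-γ * g1BI (x t) / ngBI (x t))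
          + (2:ℕ) * x t 1 ^ (2-1) * (-γ * g2BI (x t) / ngBI (x t))) S t :=
      (hu.pow 2).add (hv.pow 2)
    have hsq := (Real.hasDerivAt_sqrt hq0).comp_hasDerivWithinAt t hq
    have hwabs : HasDerivWithinAt (fun s => ε * x s 2)
        (ε * (x t 0 * (-γ * g2BI (x t) / ngBI (x t))
          - x t 1 * (-γ * g1BI (x t) / ngBI (x t)))) S t := hw.const_mul ε
    obtain ⟨D, hf, hD⟩ : ∃ D, HasDerivWithinAt
        (fun s => ((Real.sqrt ∘ fun s => x s 0 ^ 2 + x s 1 ^ 2) s - ε * x s 2) ^ 2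
          + x s 2 ^ 2) D S t ∧ D = -γ * ngBI (x t) := by
      refine ⟨_, ((hsq.sub hwabs).pow 2).add (hw.pow 2), ?_⟩
      push_cast
      norm_num
      linear_combination brockett_key γ (x t 0) (x t 1) (x t 2) σ ε
        (g1BI (x t)) (g2BI (x t)) (ngBI (x t)) hσpos.ne' hNpos.ne' hε hg1 hg2 hN2
    rw [hD] at hf
    -- transfer to Q ∘ x via local sign constancy
    have hwc : ContinuousWithinAt (fun s => x s 2) S t := hw.continuousWithinAt
    have hev : ∀ᶠ s in nhdsWithin t S, |x s 2| = ε * x s 2 := by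
      rcases lt_or_gt_of_ne hw0 with h | h
      · filter_upwards [hwc.eventually (eventually_lt_nhds h)] with s hs
        rw [abs_of_neg hs, hεdef, Real.sign_of_neg h]; ring
      · filter_upwards [hwc.eventually (eventually_gt_nhds h)] with s hs
        rw [abs_of_pos hs, hεdef, Real.sign_of_pos h]; ring
    refine hf.congr_of_eventuallyEq ?_ ?_
    · filter_upwards [hev] with s hs
      simp only [QBI, sigmaBI, Function.comp, hs]
    · simp only [QBI, sigmaBI, Function.comp, hεwt]
  -- convexity of S
  have hconv : Convex ℝ S := by
    intro a ha b hb p q hp hq hpq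
    constructor
    · have := ha.1; have := hb.1; positivity
    · rcases le_total a b with h | h
      · refine lt_of_le_of_lt ?_ hb.2
        exact_mod_cast EReal.coe_le_coe_iff.mpr (by simp only [smul_eq_mul]; nlinarith [ha.1])
      · refine lt_of_le_of_lt ?_ ha.2
        exact_mod_cast EReal.coe_le_coe_iff.mpr (by simp only [smul_eq_mul]; nlinarith [hb.1])
  -- strict antitonicity
  have hanti : StrictAntiOn (fun t => QBI (x t)) S := by
    refine strictAntiOn_of_deriv_neg hconv
      (fun t ht => (hmain t ht).1.continuousWithinAt) ?_
    intro y hy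
    have hyS : y ∈ S := interior_subset hy
    have hmem : S ∈ nhds y := mem_interior_iff_mem_nhds.mp hy
    have hd := (hmain y hyS).1.hasDerivAt hmem
    rw [hd.deriv]
    exact (hmain y hyS).2
  refine ⟨hanti, hmain, ?_⟩
  -- boundedness
  by_cases h0 : (0:ℝ) ∈ S
  · refine ⟨Real.sqrt (3 * QBI (x 0)), ?_⟩
    intro t ht
    have hQle : QBI (x t) ≤ QBI (x 0) := by
      rcases eq_or_lt_of_le ht.1 with h | h
      · rw [← h]
      · exact (hanti h0 ht h).le
    obtain ⟨hσne, -⟩ := hoff t ht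
    have hq0' : (0:ℝ) ≤ x t 0 ^ 2 + x t 1 ^ 2 := by positivity
    have hσ2 : sigmaBI (x t) ^ 2 = x t 0 ^ 2 + x t 1 ^ 2 := Real.sq_sqrt hq0'
    have hnorm : ‖x t‖ = Real.sqrt (x t 0 ^ 2 + x t 1 ^ 2 + x t 2 ^ 2) := by
      rw [EuclideanSpace.norm_eq]
      congr 1
      simp [Fin.sum_univ_three, Real.norm_eq_abs, sq_abs]
    rw [hnorm]
    apply Real.sqrt_le_sqrt
    have hQt : QBI (x t) = (sigmaBI (x t) - |x t 2|) ^ 2 + x t 2 ^ 2 := rfl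
    nlinarith [sq_nonneg (sigmaBI (x t) - 2 * |x t 2|), sq_abs (x t 2), hQle]
  · refine ⟨0, fun t ht => absurd ?_ h0⟩
    exact ⟨le_refl 0, lt_of_le_of_lt (by exact_mod_cast ht.1 : ((0:ℝ):EReal) ≤ (t:ℝ)) ht.2⟩
end
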